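/- For the path-integral Monte Carlo implementation of quantum annealing of the transverse-field Ising model, the inhomogeneous Markov chain generated by the Suzuki-Trotter Boltzmann factor is strongly ergodic, converging to the equilibrium state of the classical interaction term alone, if the transverse field satisfies Γ(t) ≥ (M/β) · artanh( (t+2)^{−2/(R·L1)} ) for all t ≥ 0. -/

import Mathlib

open Finset Filter

namespace QAPaper

variable {S : Type*}

/-- A probability distribution on the finite state space `S`, viewed as a vector. -/
def IsProbVec [Fintype S] (p : S → ℝ) : Prop :=
  (∀ x, 0 ≤ p x) ∧ ∑ x, p x = 1

/-- The ℓ¹ norm distance `‖p - p'‖ = ∑ₓ |p(x) - p'(x)|`. -/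
noncomputable def dist1 [Fintype S] (p p' : S → ℝ) : ℝ := ∑ x, |p x - p' x|

/-- A column-stochastic matrix: entries nonnegative, columns sum to one. -/
def IsStochastic [Fintype S] (G : Matrix S S ℝ) : Prop :=
  (∀ y x, 0 ≤ G y x) ∧ ∀ x, ∑ y, G y x = 1

/-- `prodG G t t0 = G (t-1) * G (t-2) * ⋯ * G t0`. -/
noncomputable def prodG [Fintype S] [DecidableEq S] (G : ℕ → Matrix S S ℝ) (t t0 : ℕ) :
    Matrix S S ℝ :=
  (((List.range (t - t0)).map fun k => G (t0 + k)).reverse).prod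

/-- Weak ergodicity: the distribution forgets its initial condition. -/
def WeaklyErgodic [Fintype S] [DecidableEq S] (G : ℕ → Matrix S S ℝ) : Prop :=
  ∀ t0 : ℕ, ∀ ε > (0 : ℝ), ∃ T : ℕ, ∀ t ≥ T,
    ∀ p0 p0' : S → ℝ, IsProbVec p0 → IsProbVec p0' →
      dist1 ((prodG G t t0).mulVec p0) ((prodG G t t0).mulVec p0') ≤ ε

/-- Strong ergodicity towards a fixed distribution `r`. -/
def StronglyErgodicTo [Fintype S] [DecidableEq S] (G : ℕ → Matrix S S ℝ) (r : S → ℝ) : Prop :=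
  ∀ t0 : ℕ, ∀ ε > (0 : ℝ), ∃ T : ℕ, ∀ t ≥ T,
    ∀ p0 : S → ℝ, IsProbVec p0 → dist1 ((prodG G t t0).mulVec p0) r ≤ ε

/-- Strong ergodicity. -/
def StronglyErgodic [Fintype S] [DecidableEq S] (G : ℕ → Matrix S S ℝ) : Prop :=
  ∃ r : S → ℝ, IsProbVec r ∧ StronglyErgodicTo G r

/-- The coefficient of ergodicity `α(G)`. -/
noncomputable def ergCoeff [Fintype S] [Nonempty S] (G : Matrix S S ℝ) : ℝ :=
  1 - Finset.univ.inf' Finset.univ_nonempty fun p : S × S => ∑ z, min (G z p.1) (G z p.2)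

/-- A generation probability: symmetric, vanishing on the diagonal, columns summing
to one, and irreducible. -/
structure IsGenProb [Fintype S] (P : S → S → ℝ) : Prop where
  symm : ∀ x y, P y x = P x y
  nonneg : ∀ x y, 0 ≤ P y x
  diag_zero : ∀ x, P x x = 0
  sum_one : ∀ x, ∑ y, P y x = 1
  irreducible : ∀ x y : S, ∃ n > 0, ∃ z : ℕ → S,
    z 0 = x ∧ z n = y ∧ ∀ k < n, 0 < P (z (k + 1)) (z k)

/-- An acceptance function: monotone increasing, valued in `[0,1]`,
with `g (1/u) = g u / u`. -/
structure IsAcceptFn (g : ℝ → ℝ) : Prop where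
  mono : MonotoneOn g (Set.Ici (0 : ℝ))
  maps : ∀ u : ℝ, 0 ≤ u → g u ∈ Set.Icc (0 : ℝ) 1
  ratio : ∀ u : ℝ, 0 < u → g (1 / u) = g u / u

/-- Partition function `Z(t)`. -/
noncomputable def Zfun [Fintype S] (F0 F1 : S → ℝ) (T0 : ℝ) (T1 : ℕ → ℝ) (t : ℕ) : ℝ :=
  ∑ x, Real.exp (-(F0 x) / T0 - F1 x / T1 t)

/-- Time-dependent Boltzmann distribution `q(x;t)`. -/
noncomputable def qB [Fintype S] (F0 F1 : S → ℝ) (T0 : ℝ) (T1 : ℕ → ℝ) (t : ℕ) (x : S) : ℝ :=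
  Real.exp (-(F0 x) / T0 - F1 x / T1 t) / Zfun F0 F1 T0 T1 t

/-- Transition matrix built from a generation probability `P` and an
acceptance probability `A`. -/
noncomputable def GmatOf [Fintype S] [DecidableEq S] (P : S → S → ℝ) (A : ℕ → S → S → ℝ)
    (t : ℕ) : Matrix S S ℝ :=
  Matrix.of fun y x => if y = x then 1 - ∑ z, P z x * A t z x else P y x * A t y x

/-- Transition matrix of path-integral Monte Carlo quantum annealing. -/
noncomputable def Gpimc [Fintype S] [DecidableEq S] (P : S → S → ℝ) (g : ℝ → ℝ)
    (F0 F1 : S → ℝ) (T0 : ℝ) (T1 : ℕ → ℝ) : ℕ → Matrix S S ℝ :=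
  GmatOf P fun t y x => g (qB F0 F1 T0 T1 t y / qB F0 F1 T0 T1 t x)

/-- The set `S_m` of local maxima of `F1` with respect to `P`. -/
def Sm [Fintype S] (P : S → S → ℝ) (F1 : S → ℝ) : Set S :=
  {x | ∀ y, 0 < P y x → F1 y ≤ F1 x}

/-- `x` can reach `y` in exactly `n` elementary transitions. -/
def ReachIn (P : S → S → ℝ) (n : ℕ) (x y : S) : Prop :=
  ∃ f : ℕ → S, f 0 = x ∧ f n = y ∧ ∀ k < n, 0 < P (f (k + 1)) (f k)

/-- `d(y,x)`: the minimum number of transitions needed to go from `x` to `y`. -/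
noncomputable def dSteps (P : S → S → ℝ) (x y : S) : ℕ :=
  sInf {n | ReachIn P n x y}

/-- `R = min { max { d(y,x) | y ∈ S } | x ∈ S \ S_m }`. -/
noncomputable def Rnum [Fintype S] (P : S → S → ℝ) (F1 : S → ℝ) : ℕ :=
  sInf {r | ∃ x, x ∉ Sm P F1 ∧ r = Finset.univ.sup fun y => dSteps P x y}

/-- The maximum change of `F` in a single transition. -/
noncomputable def Lmax [Fintype S] (P : S → S → ℝ) (F : S → ℝ) : ℝ :=
  sSup {v | ∃ x y : S, 0 < P y x ∧ v = |F x - F y|}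

/-- The minimum nonvanishing value of the generation probability. -/
noncomputable def wmin [Fintype S] (P : S → S → ℝ) : ℝ :=
  sInf {v | ∃ x y : S, 0 < P y x ∧ v = P y x}

/-- The set of global minima of `F1`. -/
def S1min [Fintype S] (F1 : S → ℝ) : Set S := {x | ∀ y, F1 x ≤ F1 y}

/-- The limiting distribution: proportional to `exp (-F0 x / T0)` on the set of
global minima of `F1`, and zero elsewhere. -/
noncomputable def rLimit [Fintype S] (F0 F1 : S → ℝ) (T0 : ℝ) (x : S) : ℝ :=
  if ∀ y, F1 x ≤ F1 y then
    Real.exp (-(F0 x) / T0) /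
      ∑ y ∈ Finset.univ.filter (fun y => ∀ z, F1 y ≤ F1 z), Real.exp (-(F0 y) / T0)
  else 0

/-- The ±1 value of a Boolean spin. -/
noncomputable def spin (b : Bool) : ℝ := if b then 1 else -1

/-- Classical Ising energy `E0(x) = -∑_{i<j} J_ij x_i x_j`. -/
noncomputable def E0def (N : ℕ) (J : Fin N → Fin N → ℝ) (x : Fin N → Bool) : ℝ :=
  -∑ p ∈ Finset.univ.filter (fun p : Fin N × Fin N => p.1 < p.2),
    J p.1 p.2 * spin (x p.1) * spin (x p.2)

/-- Hamming distance between spin configurations. -/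
def hamming (N : ℕ) (x y : Fin N → Bool) : ℕ :=
  (Finset.univ.filter fun i => x i ≠ y i).card

/-- GFMC weight `w(x;t) = 1 - Δt (E0(x) - E_T) + N Δt Γ(t)`. -/
noncomputable def wgt (N : ℕ) (J : Fin N → Fin N → ℝ) (Δt ET : ℝ) (Γ : ℕ → ℝ) (t : ℕ)
    (x : Fin N → Bool) : ℝ :=
  1 - Δt * (E0def N J x - ET) + N * Δt * Γ t

/-- The normalized GFMC transition probability `G1(y,x;t)`. -/
noncomputable def G1mat (N : ℕ) (J : Fin N → Fin N → ℝ) (Δt ET : ℝ) (Γ : ℕ → ℝ) (t : ℕ) :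
    Matrix (Fin N → Bool) (Fin N → Bool) ℝ :=
  Matrix.of fun y x =>
    if y = x then 1 - N * Δt * Γ t / wgt N J Δt ET Γ t x
    else if hamming N x y = 1 then Δt * Γ t / wgt N J Δt ET Γ t x
    else 0

/-- `E_min = min { E0(x) | x ∈ S }`. -/
noncomputable def Emin (N : ℕ) (J : Fin N → Fin N → ℝ) : ℝ :=
  Finset.univ.inf' Finset.univ_nonempty (E0def N J)

/-- Stationary distribution `q(x;t) = w(x;t) / ∑_y w(y;t)` of GFMC. -/
noncomputable def qGFMC (N : ℕ) (J : Fin N → Fin N → ℝ) (Δt ET : ℝ) (Γ : ℕ → ℝ) (t : ℕ)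
    (x : Fin N → Bool) : ℝ :=
  wgt N J Δt ET Γ t x / ∑ y, wgt N J Δt ET Γ t y

/-- The alternative GFMC transition probability `G2(y,x;t)`. -/
noncomputable def G2mat (N : ℕ) (Δt : ℝ) (Γ : ℕ → ℝ) (t : ℕ) :
    Matrix (Fin N → Bool) (Fin N → Bool) ℝ :=
  Matrix.of fun y x =>
    (Real.cosh (Δt * Γ t) * Real.exp (-(Δt * Γ t))) ^ N *
      Real.tanh (Δt * Γ t) ^ hamming N x y

/-- Inverse hyperbolic tangent. -/
noncomputable def artanh (x : ℝ) : ℝ := (1 / 2) * Real.log ((1 + x) / (1 - x))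

/-- The cost function of the Suzuki–Trotter representation of the TFIM:
`F0(x) = -(β/M) ∑_k ∑_{ij} J_ij S_i^(k) S_j^(k)`. -/
noncomputable def F0tfim (N M : ℕ) (β : ℝ) (J : Fin (N + 1) → Fin (N + 1) → ℝ)
    (x : Fin (N + 1) × Fin M → Bool) : ℝ :=
  -(β / M) * ∑ k : Fin M, ∑ i : Fin (N + 1), ∑ j : Fin (N + 1),
    J i j * spin (x (i, k)) * spin (x (j, k))

/-- The kinetic term of the Suzuki–Trotter representation of the TFIM:
`F1(x) = -∑_k ∑_i S_i^(k) S_i^(k+1)` with periodic boundary along the Trotter direction. -/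
noncomputable def F1tfim (N M : ℕ) [NeZero M] (x : Fin (N + 1) × Fin M → Bool) : ℝ :=
  -∑ k : Fin M, ∑ i : Fin (N + 1), spin (x (i, k)) * spin (x (i, k + 1))

/-- The ferromagnetic coupling `γ(t) = (1/2) log coth (β Γ(t) / M)` between Trotter slices. -/
noncomputable def γtfim (M : ℕ) (β : ℝ) (Γ : ℕ → ℝ) (t : ℕ) : ℝ :=
  (1 / 2) * Real.log (1 / Real.tanh (β * Γ t / M))

/-- Tsallis-type generalized acceptance ratio `u(y,x;t)`. -/
noncomputable def uGen {S : Type*} (F0 F1 : S → ℝ) (T0 : ℝ) (T1 : ℕ → ℝ) (qp : ℝ) (t : ℕ)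
    (y x : S) : ℝ :=
  Real.exp (-(F0 y - F0 x) / T0) *
    (1 + (qp - 1) * (F1 y - F1 x) / T1 t) ^ (1 / (1 - qp))



/-! ### Auxiliary development -/

section Abstract

variable {S : Type*} [Fintype S] [DecidableEq S]

lemma prodG_self (G : ℕ → Matrix S S ℝ) (t : ℕ) : prodG G t t = 1 := by
  simp [prodG]

lemma prodG_succ (G : ℕ → Matrix S S ℝ) {t t0 : ℕ} (h : t0 ≤ t) :
    prodG G (t + 1) t0 = G t * prodG G t t0 := by
  unfold prodG
  rw [show t + 1 - t0 = (t - t0) + 1 by omega, List.range_succ]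
  simp [Nat.add_sub_cancel' h]

lemma prodG_mul (G : ℕ → Matrix S S ℝ) {t s t0 : ℕ} (h0 : t0 ≤ s) (h1 : s ≤ t) :
    prodG G t s * prodG G s t0 = prodG G t t0 := by
  induction t with
  | zero =>
      have : s = 0 := by omega
      subst this
      simp [prodG_self]
  | succ t ih =>
      rcases Nat.lt_or_ge s (t+1) with hlt | hge
      · have hs : s ≤ t := by omega
        rw [prodG_succ G hs, prodG_succ G (le_trans h0 hs), mul_assoc, ih hs]
      · have : s = t + 1 := by omega
        subst this
        simp [prodG_self]

lemma IsStochastic.one : IsStochastic (1 : Matrix S S ℝ) := by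
  constructor
  · intro y x
    by_cases h : y = x <;> simp [Matrix.one_apply, h]
  · intro x
    simp [Matrix.one_apply]

lemma IsStochastic.mul {A B : Matrix S S ℝ} (hA : IsStochastic A) (hB : IsStochastic B) :
    IsStochastic (A * B) := by
  constructor
  · intro y x
    rw [Matrix.mul_apply]
    exact Finset.sum_nonneg fun z _ => mul_nonneg (hA.1 y z) (hB.1 z x)
  · intro x
    simp only [Matrix.mul_apply]
    rw [Finset.sum_comm]
    have : ∀ z, ∑ y, A y z * B z x = B z x := by
      intro z
      rw [← Finset.sum_mul, hA.2 z, one_mul]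
    simp only [this, hB.2 x]

lemma IsStochastic.prodG {G : ℕ → Matrix S S ℝ} (hG : ∀ t, IsStochastic (G t))
    {t t0 : ℕ} (h : t0 ≤ t) : IsStochastic (prodG G t t0) := by
  induction t with
  | zero =>
      have : t0 = 0 := by omega
      subst this; rw [prodG_self]; exact IsStochastic.one
  | succ t ih =>
      rcases Nat.lt_or_ge t0 (t+1) with hlt | hge
      · have ht : t0 ≤ t := by omega
        rw [prodG_succ G ht]
        exact (hG t).mul (ih ht)
      · have : t0 = t + 1 := by omega
        subst this; rw [prodG_self]; exact IsStochastic.one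

lemma stochastic_sum_mulVec {G : Matrix S S ℝ} (hG : IsStochastic G) (v : S → ℝ) :
    ∑ z, G.mulVec v z = ∑ x, v x := by
  simp only [Matrix.mulVec, dotProduct]
  rw [Finset.sum_comm]
  exact Finset.sum_congr rfl fun x _ => by rw [← Finset.sum_mul, hG.2 x, one_mul]

lemma stochastic_norm1_mulVec_le {G : Matrix S S ℝ} (hG : IsStochastic G) (v : S → ℝ) :
    ∑ z, |G.mulVec v z| ≤ ∑ x, |v x| := by
  calc ∑ z, |G.mulVec v z| ≤ ∑ z, ∑ x, G z x * |v x| := by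
        apply Finset.sum_le_sum
        intro z _
        refine (Finset.abs_sum_le_sum_abs _ _).trans ?_
        apply Finset.sum_le_sum
        intro x _
        rw [abs_mul, abs_of_nonneg (hG.1 z x)]
    _ = ∑ x, |v x| := by
        rw [Finset.sum_comm]
        exact Finset.sum_congr rfl fun x _ => by rw [← Finset.sum_mul, hG.2 x, one_mul]

lemma IsStochastic.mulVec_probVec {G : Matrix S S ℝ} (hG : IsStochastic G)
    {p : S → ℝ} (hp : IsProbVec p) : IsProbVec (G.mulVec p) := by
  constructor
  · intro z
    exact Finset.sum_nonneg fun x _ => mul_nonneg (hG.1 z x) (hp.1 x)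
  · rw [stochastic_sum_mulVec hG, hp.2]

/-- Dobrushin-type contraction for column-stochastic matrices on zero-sum vectors. -/
lemma dobrushin {G : Matrix S S ℝ} (hG : IsStochastic G) {η : ℝ}
    (hη : ∀ x1 x2 : S, η ≤ ∑ z, min (G z x1) (G z x2))
    {v : S → ℝ} (hv : ∑ x, v x = 0) :
    ∑ z, |G.mulVec v z| ≤ (1 - η) * ∑ x, |v x| := by
  classical
  set vp : S → ℝ := fun x => max (v x) 0 with hvp
  set vm : S → ℝ := fun x => max (-v x) 0 with hvm
  have hvpm : ∀ x, v x = vp x - vm x := by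
    intro x
    show v x = max (v x) 0 - max (-v x) 0
    rcases le_total (v x) 0 with h | h
    · rw [max_eq_right h, max_eq_left (neg_nonneg.mpr h)]; ring
    · rw [max_eq_left h, max_eq_right (neg_nonpos.mpr h)]; ring
  have habs : ∀ x, |v x| = vp x + vm x := by
    intro x
    show |v x| = max (v x) 0 + max (-v x) 0
    rcases le_total (v x) 0 with h | h
    · rw [abs_of_nonpos h, max_eq_right h, max_eq_left (neg_nonneg.mpr h)]; ring
    · rw [abs_of_nonneg h, max_eq_left h, max_eq_right (neg_nonpos.mpr h)]; ring
  set s : ℝ := ∑ x, vp x with hs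
  have hsm : ∑ x, vm x = s := by
    have h2 : ∑ x, (vp x - vm x) = 0 := by
      rw [← hv]; exact Finset.sum_congr rfl fun x _ => (hvpm x).symm
    rw [Finset.sum_sub_distrib] at h2
    linarith
  have hnorm : ∑ x, |v x| = 2 * s := by
    rw [Finset.sum_congr rfl fun x _ => habs x, Finset.sum_add_distrib, hsm]; ring
  have hs0 : 0 ≤ s := Finset.sum_nonneg fun x _ => le_max_right _ _
  rcases eq_or_lt_of_le hs0 with hseq | hspos
  · -- v = 0
    have hv0 : ∀ x, v x = 0 := by
      intro x
      have h1 : ∑ x, |v x| = 0 := by rw [hnorm, ← hseq]; ring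
      have := (Finset.sum_eq_zero_iff_of_nonneg (fun x _ => abs_nonneg (v x))).mp h1 x
        (Finset.mem_univ x)
      exact abs_eq_zero.mp this
    have hz : ∀ z, G.mulVec v z = 0 := by
      intro z; simp only [Matrix.mulVec, dotProduct]
      exact Finset.sum_eq_zero fun x _ => by rw [hv0 x, mul_zero]
    simp only [hz, abs_zero, Finset.sum_const_zero]
    have h1 : ∑ x, |v x| = 0 := by rw [hnorm, ← hseq]; ring
    rw [h1, mul_zero]
  · have huniv : (Finset.univ : Finset S).Nonempty := by
      rcases (Finset.univ : Finset S).eq_empty_or_nonempty with h | h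
      · exfalso; rw [hs, h, Finset.sum_empty] at hspos; exact lt_irrefl 0 hspos
      · exact h
    obtain ⟨x0, _⟩ := huniv
    have hη1 : η ≤ 1 := by
      have h1 := hη x0 x0
      simpa [hG.2 x0] using h1
    have key : ∀ z, s * (G.mulVec v z) = ∑ x, ∑ y, vp x * vm y * (G z x - G z y) := by
      intro z
      have hR : ∑ x, ∑ y, vp x * vm y * (G z x - G z y)
          = (∑ x, vp x * G z x) * (∑ y, vm y) - (∑ x, vp x) * (∑ y, vm y * G z y) := by
        rw [Finset.sum_mul_sum, Finset.sum_mul_sum, ← Finset.sum_sub_distrib]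
        refine Finset.sum_congr rfl fun x _ => ?_
        rw [← Finset.sum_sub_distrib]
        exact Finset.sum_congr rfl fun y _ => by ring
      have hL : G.mulVec v z = (∑ x, vp x * G z x) - (∑ y, vm y * G z y) := by
        simp only [Matrix.mulVec, dotProduct]
        rw [← Finset.sum_sub_distrib]
        exact Finset.sum_congr rfl fun x _ => by rw [hvpm x]; ring
      rw [hR, hsm, ← hs, hL]
      ring
    have hcol : ∀ x y : S, ∑ z, |G z x - G z y| ≤ 2 * (1 - η) := by
      intro x y
      have h1 : ∀ z, |G z x - G z y| = G z x + G z y - 2 * min (G z x) (G z y) := by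
        intro z
        rcases le_total (G z x) (G z y) with h | h
        · rw [abs_of_nonpos (by linarith), min_eq_left h]; ring
        · rw [abs_of_nonneg (by linarith), min_eq_right h]; ring
      simp only [h1]
      rw [Finset.sum_sub_distrib, Finset.sum_add_distrib, hG.2 x, hG.2 y, ← Finset.mul_sum]
      have := hη x y
      linarith
    have main : s * ∑ z, |G.mulVec v z| ≤ s * ((1 - η) * ∑ x, |v x|) := by
      have hstep : ∀ z, s * |G.mulVec v z| ≤ ∑ x, ∑ y, vp x * vm y * |G z x - G z y| := by
        intro z
        have h1 : s * |G.mulVec v z| = |s * G.mulVec v z| := by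
          rw [abs_mul, abs_of_nonneg (le_of_lt hspos)]
        rw [h1, key z]
        refine (Finset.abs_sum_le_sum_abs _ _).trans ?_
        apply Finset.sum_le_sum
        intro x _
        refine (Finset.abs_sum_le_sum_abs _ _).trans ?_
        apply Finset.sum_le_sum
        intro y _
        rw [abs_mul, abs_mul, abs_of_nonneg (le_max_right _ _), abs_of_nonneg (le_max_right _ _)]
      calc s * ∑ z, |G.mulVec v z| = ∑ z, s * |G.mulVec v z| := by rw [Finset.mul_sum]
        _ ≤ ∑ z, ∑ x, ∑ y, vp x * vm y * |G z x - G z y| :=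
            Finset.sum_le_sum fun z _ => hstep z
        _ = ∑ x, ∑ y, vp x * vm y * ∑ z, |G z x - G z y| := by
            rw [Finset.sum_comm]
            refine Finset.sum_congr rfl fun x _ => ?_
            rw [Finset.sum_comm]
            refine Finset.sum_congr rfl fun y _ => ?_
            rw [Finset.mul_sum]
        _ ≤ ∑ x, ∑ y, vp x * vm y * (2 * (1 - η)) := by
            apply Finset.sum_le_sum; intro x _
            apply Finset.sum_le_sum; intro y _
            exact mul_le_mul_of_nonneg_left (hcol x y)
              (mul_nonneg (le_max_right _ _) (le_max_right _ _))
        _ = s * s * (2 * (1 - η)) := by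
            simp only [← Finset.sum_mul]
            rw [← Finset.sum_mul_sum, ← hs, hsm]
        _ = s * ((1 - η) * ∑ x, |v x|) := by rw [hnorm]; ring
    exact le_of_mul_le_mul_left main hspos

end Abstract
section Abstract2

variable {S : Type*} [Fintype S] [DecidableEq S]

lemma dist1_triangle (a b c : S → ℝ) : dist1 a c ≤ dist1 a b + dist1 b c := by
  unfold dist1
  rw [← Finset.sum_add_distrib]
  apply Finset.sum_le_sum
  intro x _
  have : a x - c x = (a x - b x) + (b x - c x) := by ring
  rw [this]
  exact abs_add_le _ _

lemma dist1_comm (a b : S → ℝ) : dist1 a b = dist1 b a := by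
  unfold dist1
  exact Finset.sum_congr rfl fun x _ => abs_sub_comm _ _

lemma dist1_eq_norm1_sub (A : Matrix S S ℝ) (p p' : S → ℝ) :
    dist1 (A.mulVec p) (A.mulVec p') = ∑ z, |A.mulVec (fun x => p x - p' x) z| := by
  unfold dist1
  refine Finset.sum_congr rfl fun z _ => ?_
  congr 1
  simp only [Matrix.mulVec, dotProduct, mul_sub, Finset.sum_sub_distrib]

lemma prodG_mulVec (G : ℕ → Matrix S S ℝ) {t s t0 : ℕ} (h0 : t0 ≤ s) (h1 : s ≤ t)
    (v : S → ℝ) :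
    (prodG G t t0).mulVec v = (prodG G t s).mulVec ((prodG G s t0).mulVec v) := by
  rw [Matrix.mulVec_mulVec, prodG_mul G h0 h1]

/-- Blocks with a uniformly positive anchor row force weak ergodicity. -/
lemma weaklyErgodic_of_anchor (G : ℕ → Matrix S S ℝ) (hG : ∀ t, IsStochastic (G t))
    (R : ℕ) (hR : 0 < R) (xstar : S) (T : ℕ) (c : ℕ → ℝ)
    (hc0 : ∀ s, 0 ≤ c s)
    (hanchor : ∀ s, T ≤ s → ∀ x, c s ≤ prodG G (s + R) s xstar x)
    (hdiv : ∀ s0, Tendsto (fun n => ∑ k ∈ Finset.range n, c (s0 + k * R)) atTop atTop) :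
    WeaklyErgodic G := by
  intro t0 ε hε
  set s0 := max t0 T with hs0
  -- block contraction
  have hc1 : ∀ s, T ≤ s → c s ≤ 1 := by
    intro s hs
    have h1 := hanchor s hs xstar
    have hst : IsStochastic (prodG G (s + R) s) := IsStochastic.prodG hG (Nat.le_add_right _ _)
    calc c s ≤ prodG G (s + R) s xstar xstar := h1
      _ ≤ ∑ z, prodG G (s + R) s z xstar :=
          Finset.single_le_sum (fun z _ => hst.1 z xstar) (Finset.mem_univ xstar)
      _ = 1 := hst.2 xstar
  have hblock : ∀ n : ℕ, ∀ w : S → ℝ, ∑ x, w x = 0 →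
      ∑ z, |(prodG G (s0 + n * R) s0).mulVec w z| ≤
        (∏ k ∈ Finset.range n, (1 - c (s0 + k * R))) * ∑ x, |w x| := by
    intro n
    induction n with
    | zero =>
        intro w _
        simp [prodG_self, Matrix.one_mulVec]
    | succ n ih =>
        intro w hw
        have h1 : s0 ≤ s0 + n * R := Nat.le_add_right _ _
        have h2 : s0 + n * R ≤ s0 + (n + 1) * R := by
          apply Nat.add_le_add_left; exact Nat.mul_le_mul_right _ (Nat.le_succ n)
        rw [prodG_mulVec G h1 h2]
        set w' := (prodG G (s0 + n * R) s0).mulVec w with hw'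
        have hw'0 : ∑ x, w' x = 0 := by
          rw [hw', stochastic_sum_mulVec (IsStochastic.prodG hG h1), hw]
        have hTn : T ≤ s0 + n * R := le_trans (le_max_right _ _) (Nat.le_add_right _ _)
        have hcontr : ∑ z, |(prodG G (s0 + (n+1) * R) (s0 + n * R)).mulVec w' z| ≤
            (1 - c (s0 + n * R)) * ∑ x, |w' x| := by
          have heq : s0 + (n + 1) * R = (s0 + n * R) + R := by ring
          rw [heq]
          apply dobrushin (IsStochastic.prodG hG (Nat.le_add_right _ _)) _ hw'0
          intro x1 x2
          have hst : IsStochastic (prodG G ((s0 + n * R) + R) (s0 + n * R)) :=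
            IsStochastic.prodG hG (Nat.le_add_right _ _)
          calc c (s0 + n * R)
              ≤ min (prodG G ((s0 + n * R) + R) (s0 + n * R) xstar x1)
                  (prodG G ((s0 + n * R) + R) (s0 + n * R) xstar x2) :=
                le_min (hanchor _ hTn x1) (hanchor _ hTn x2)
            _ ≤ ∑ z, min (prodG G ((s0 + n * R) + R) (s0 + n * R) z x1)
                  (prodG G ((s0 + n * R) + R) (s0 + n * R) z x2) :=
                Finset.single_le_sum
                  (fun z _ => le_min (hst.1 z x1) (hst.1 z x2)) (Finset.mem_univ xstar)
        calc ∑ z, |(prodG G (s0 + (n+1) * R) (s0 + n * R)).mulVec w' z|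
            ≤ (1 - c (s0 + n * R)) * ∑ x, |w' x| := hcontr
          _ ≤ (1 - c (s0 + n * R)) *
              ((∏ k ∈ Finset.range n, (1 - c (s0 + k * R))) * ∑ x, |w x|) := by
              apply mul_le_mul_of_nonneg_left (ih w hw)
              linarith [hc1 _ hTn]
          _ = (∏ k ∈ Finset.range (n+1), (1 - c (s0 + k * R))) * ∑ x, |w x| := by
              rw [Finset.prod_range_succ]; ring
  -- choose number of blocks
  have hexp : Tendsto (fun n => 2 * Real.exp (-∑ k ∈ Finset.range n, c (s0 + k * R)))
      atTop (nhds 0) := by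
    have h1 : Tendsto (fun n => -∑ k ∈ Finset.range n, c (s0 + k * R)) atTop atBot :=
      Filter.Tendsto.const_mul_atTop_of_neg (by norm_num : (-1 : ℝ) < 0) (hdiv s0) |>.congr (fun n => by ring)
    have h2 := Real.tendsto_exp_atBot.comp h1
    simpa using h2.const_mul 2
  obtain ⟨n, hn⟩ := (Metric.tendsto_atTop.mp hexp ε hε).imp (fun n hn => hn n le_rfl)
  have hn' : 2 * Real.exp (-∑ k ∈ Finset.range n, c (s0 + k * R)) < ε := by
    have := hn
    rw [Real.dist_eq, sub_zero] at this
    calc 2 * Real.exp (-∑ k ∈ Finset.range n, c (s0 + k * R))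
        ≤ |2 * Real.exp (-∑ k ∈ Finset.range n, c (s0 + k * R))| := le_abs_self _
      _ < ε := this
  refine ⟨s0 + n * R, fun t ht p0 p0' hp0 hp0' => ?_⟩
  have ht0 : t0 ≤ s0 := le_max_left _ _
  have hs0n : s0 ≤ s0 + n * R := Nat.le_add_right _ _
  set v : S → ℝ := fun x => p0 x - p0' x with hv
  have hvsum : ∑ x, v x = 0 := by
    simp only [hv, Finset.sum_sub_distrib, hp0.2, hp0'.2, sub_self]
  have hvnorm : ∑ x, |v x| ≤ 2 := by
    calc ∑ x, |v x| ≤ ∑ x, (p0 x + p0' x) := by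
          apply Finset.sum_le_sum
          intro x _
          rw [hv]
          calc |p0 x - p0' x| ≤ |p0 x| + |p0' x| := abs_sub _ _
            _ = p0 x + p0' x := by rw [abs_of_nonneg (hp0.1 x), abs_of_nonneg (hp0'.1 x)]
      _ = 2 := by rw [Finset.sum_add_distrib, hp0.2, hp0'.2]; norm_num
  rw [dist1_eq_norm1_sub]
  have hd1 : t0 ≤ s0 + n * R := le_trans ht0 hs0n
  rw [prodG_mulVec G hd1 ht, prodG_mulVec G ht0 hs0n]
  set w0 := (prodG G s0 t0).mulVec v with hw0
  have hw0sum : ∑ x, w0 x = 0 := by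
    rw [hw0, stochastic_sum_mulVec (IsStochastic.prodG hG ht0), hvsum]
  have hw0norm : ∑ x, |w0 x| ≤ 2 :=
    le_trans (stochastic_norm1_mulVec_le (IsStochastic.prodG hG ht0) v) hvnorm
  calc ∑ z, |(prodG G t (s0 + n * R)).mulVec
        ((prodG G (s0 + n * R) s0).mulVec w0) z|
      ≤ ∑ z, |(prodG G (s0 + n * R) s0).mulVec w0 z| :=
        stochastic_norm1_mulVec_le (IsStochastic.prodG hG ht) _
    _ ≤ (∏ k ∈ Finset.range n, (1 - c (s0 + k * R))) * ∑ x, |w0 x| := hblock n w0 hw0sum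
    _ ≤ (∏ k ∈ Finset.range n, Real.exp (-c (s0 + k * R))) * 2 := by
        apply mul_le_mul
        · apply Finset.prod_le_prod
          · intro k _
            have : T ≤ s0 + k * R := le_trans (le_max_right _ _) (Nat.le_add_right _ _)
            linarith [hc1 _ this]
          · intro k _
            have h := Real.add_one_le_exp (-c (s0 + k * R))
            linarith
        · exact hw0norm
        · exact Finset.sum_nonneg fun x _ => abs_nonneg _
        · exact Finset.prod_nonneg fun k _ => Real.exp_nonneg _
    _ = 2 * Real.exp (-∑ k ∈ Finset.range n, c (s0 + k * R)) := by
        rw [← Real.exp_sum]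
        rw [show (∑ k ∈ Finset.range n, -c (s0 + k * R))
          = -∑ k ∈ Finset.range n, c (s0 + k * R) by rw [Finset.sum_neg_distrib]]
        ring
    _ ≤ ε := le_of_lt hn'

end Abstract2
section Abstract3

variable {S : Type*} [Fintype S] [DecidableEq S]

/-- Key estimate: propagating the stationary distribution of time `s` up to time `t`
stays within the cumulative variation of the stationary distributions. -/
lemma stationary_drift (G : ℕ → Matrix S S ℝ) (hG : ∀ t, IsStochastic (G t))
    (q : ℕ → S → ℝ) (hstat : ∀ t, (G t).mulVec (q t) = q t)
    {s t : ℕ} (hst : s ≤ t) :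
    dist1 ((prodG G t s).mulVec (q s)) (q t) ≤
      ∑ k ∈ Finset.Ico s t, dist1 (q (k + 1)) (q k) := by
  induction t with
  | zero =>
      have : s = 0 := by omega
      subst this
      simp [prodG_self, Matrix.one_mulVec, dist1]
  | succ t ih =>
      rcases Nat.lt_or_ge s (t + 1) with hlt | hge
      · have hs : s ≤ t := by omega
        rw [prodG_succ G hs, ← Matrix.mulVec_mulVec]
        calc dist1 ((G t).mulVec ((prodG G t s).mulVec (q s))) (q (t + 1))
            ≤ dist1 ((G t).mulVec ((prodG G t s).mulVec (q s))) ((G t).mulVec (q t)) +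
              dist1 ((G t).mulVec (q t)) (q (t + 1)) := dist1_triangle _ _ _
          _ ≤ (∑ k ∈ Finset.Ico s t, dist1 (q (k + 1)) (q k)) + dist1 (q (t+1)) (q t) := by
              apply add_le_add
              · rw [dist1_eq_norm1_sub]
                refine le_trans (stochastic_norm1_mulVec_le (hG t) _) ?_
                have := ih hs
                rw [dist1] at this
                exact this
              · rw [hstat t, dist1_comm]
          _ = ∑ k ∈ Finset.Ico s (t + 1), dist1 (q (k + 1)) (q k) := by
              rw [Finset.sum_Ico_succ_top hs]
      · have : s = t + 1 := by omega
        subst this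
        simp [prodG_self, Matrix.one_mulVec, dist1]

/-- Strong ergodicity from weak ergodicity plus stationary distributions with
summable total variation. -/
lemma stronglyErgodicTo_of (G : ℕ → Matrix S S ℝ) (hG : ∀ t, IsStochastic (G t))
    (hWE : WeaklyErgodic G) (q : ℕ → S → ℝ) (hq : ∀ t, IsProbVec (q t))
    (hstat : ∀ t, (G t).mulVec (q t) = q t)
    (C : ℝ) (hsum : ∀ n, ∑ k ∈ Finset.range n, dist1 (q (k+1)) (q k) ≤ C)
    (r : S → ℝ) (hqr : Tendsto (fun t => dist1 (q t) r) atTop (nhds 0)) :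
    StronglyErgodicTo G r := by
  intro t0 ε hε
  set V : ℕ → ℝ := fun k => dist1 (q (k+1)) (q k) with hV
  have hV0 : ∀ k, 0 ≤ V k := fun k => Finset.sum_nonneg fun x _ => abs_nonneg _
  set L : ℕ → ℝ := fun n => ∑ k ∈ Finset.range n, V k with hL
  have hLmono : Monotone L := by
    intro a b hab
    exact Finset.sum_le_sum_of_subset_of_nonneg (Finset.range_subset_range.mpr hab)
      (fun k _ _ => hV0 k)
  have hLbdd : BddAbove (Set.range L) := ⟨C, by rintro x ⟨n, rfl⟩; exact hsum n⟩
  have hLlim : Tendsto L atTop (nhds (⨆ n, L n)) := tendsto_atTop_ciSup hLmono hLbdd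
  -- choose s with small tail
  have h3 : (0 : ℝ) < ε / 3 := by linarith
  obtain ⟨s1, hs1⟩ := (Metric.tendsto_atTop.mp hLlim (ε / 3) h3)
  set s := max s1 t0 with hs
  have htail : ∀ t, s ≤ t → ∑ k ∈ Finset.Ico s t, V k ≤ ε / 3 := by
    intro t hts
    have h1 : ∑ k ∈ Finset.Ico s t, V k = L t - L s :=
      Finset.sum_Ico_eq_sub _ hts
    have h2 : L t ≤ ⨆ n, L n := le_ciSup hLbdd t
    have h3 : |L s - ⨆ n, L n| < ε / 3 := by
      have := hs1 s (le_max_left _ _)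
      rwa [Real.dist_eq] at this
    have h4 : (⨆ n, L n) - L s < ε / 3 := by
      rcases abs_lt.mp h3 with ⟨ha, hb⟩
      linarith
    linarith
  -- choose T2 for convergence q t → r
  obtain ⟨T2, hT2⟩ := (Metric.tendsto_atTop.mp hqr (ε / 3) h3)
  have hT2' : ∀ t, T2 ≤ t → dist1 (q t) r ≤ ε / 3 := by
    intro t ht
    have := hT2 t ht
    rw [Real.dist_eq, sub_zero] at this
    have habs : dist1 (q t) r ≤ |dist1 (q t) r| := le_abs_self _
    linarith
  -- weak ergodicity at initial time s
  obtain ⟨T1, hT1⟩ := hWE s (ε / 3) h3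
  refine ⟨max (max T1 T2) s, fun t ht p0 hp0 => ?_⟩
  have hts : s ≤ t := le_trans (le_max_right _ _) ht
  have ht0s : t0 ≤ s := le_max_right _ _
  have hqs : IsProbVec (q s) := hq s
  set ps := (prodG G s t0).mulVec p0 with hps
  have hpsprob : IsProbVec ps := (IsStochastic.prodG hG ht0s).mulVec_probVec hp0
  have hdecomp : (prodG G t t0).mulVec p0 = (prodG G t s).mulVec ps :=
    prodG_mulVec G ht0s hts p0
  rw [hdecomp]
  calc dist1 ((prodG G t s).mulVec ps) r
      ≤ dist1 ((prodG G t s).mulVec ps) ((prodG G t s).mulVec (q s)) +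
        dist1 ((prodG G t s).mulVec (q s)) r := dist1_triangle _ _ _
    _ ≤ dist1 ((prodG G t s).mulVec ps) ((prodG G t s).mulVec (q s)) +
        (dist1 ((prodG G t s).mulVec (q s)) (q t) + dist1 (q t) r) := by
        linarith [dist1_triangle ((prodG G t s).mulVec (q s)) (q t) r]
    _ ≤ ε / 3 + (ε / 3 + ε / 3) := by
        gcongr
        · exact hT1 t (le_trans (le_trans (le_max_left _ _) (le_max_left _ _)) ht) ps (q s)
            hpsprob hqs
        · exact le_trans (stationary_drift G hG q hstat hts) (htail t hts)
        · exact hT2' t (le_trans (le_trans (le_max_right _ _) (le_max_left _ _)) ht)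
    _ = ε := by ring

end Abstract3
section Boltzmann

variable {S : Type*} [Fintype S] [DecidableEq S] [Nonempty S]

/-- The Boltzmann distribution at coupling `γ`. -/
noncomputable def Qbolt (F0 F1 : S → ℝ) (γ : ℝ) (x : S) : ℝ :=
  Real.exp (-F0 x - γ * F1 x) / ∑ y, Real.exp (-F0 y - γ * F1 y)

lemma Zbolt_pos (F0 F1 : S → ℝ) (γ : ℝ) : 0 < ∑ y, Real.exp (-F0 y - γ * F1 y) :=
  Finset.sum_pos (fun y _ => Real.exp_pos _) Finset.univ_nonempty

lemma Qbolt_pos (F0 F1 : S → ℝ) (γ : ℝ) (x : S) : 0 < Qbolt F0 F1 γ x :=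
  div_pos (Real.exp_pos _) (Zbolt_pos F0 F1 γ)

lemma Qbolt_sum (F0 F1 : S → ℝ) (γ : ℝ) : ∑ x, Qbolt F0 F1 γ x = 1 := by
  unfold Qbolt
  rw [← Finset.sum_div]
  exact div_self (ne_of_gt (Zbolt_pos F0 F1 γ))

lemma Qbolt_le_one (F0 F1 : S → ℝ) (γ : ℝ) (x : S) : Qbolt F0 F1 γ x ≤ 1 := by
  unfold Qbolt
  rw [div_le_one (Zbolt_pos F0 F1 γ)]
  exact Finset.single_le_sum (f := fun y => Real.exp (-F0 y - γ * F1 y))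
    (fun y _ => le_of_lt (Real.exp_pos _)) (Finset.mem_univ x)

lemma Qbolt_probVec (F0 F1 : S → ℝ) (γ : ℝ) : IsProbVec (Qbolt F0 F1 γ) :=
  ⟨fun x => le_of_lt (Qbolt_pos F0 F1 γ x), Qbolt_sum F0 F1 γ⟩

lemma Qbolt_ratio (F0 F1 : S → ℝ) (γ : ℝ) (y x : S) :
    Qbolt F0 F1 γ y / Qbolt F0 F1 γ x =
      Real.exp ((F0 x - F0 y) + γ * (F1 x - F1 y)) := by
  unfold Qbolt
  rw [div_div_div_comm, div_self (ne_of_gt (Zbolt_pos F0 F1 γ)), div_one, ← Real.exp_sub]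
  congr 1
  ring

/-- Mean of `F1` under the Boltzmann distribution. -/
noncomputable def Ebolt (F0 F1 : S → ℝ) (γ : ℝ) : ℝ := ∑ x, F1 x * Qbolt F0 F1 γ x

lemma Ebolt_ge (F0 F1 : S → ℝ) (γ : ℝ) (x : S) (hx : ∀ y, F1 x ≤ F1 y) :
    F1 x ≤ Ebolt F0 F1 γ := by
  unfold Ebolt
  calc F1 x = ∑ y, F1 x * Qbolt F0 F1 γ y := by
        rw [← Finset.mul_sum, Qbolt_sum, mul_one]
    _ ≤ ∑ y, F1 y * Qbolt F0 F1 γ y :=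
        Finset.sum_le_sum fun y _ =>
          mul_le_mul_of_nonneg_right (hx y) (le_of_lt (Qbolt_pos F0 F1 γ y))

lemma hasDerivAt_Qbolt (F0 F1 : S → ℝ) (γ : ℝ) (x : S) :
    HasDerivAt (fun γ' => Qbolt F0 F1 γ' x)
      (Qbolt F0 F1 γ x * (Ebolt F0 F1 γ - F1 x)) γ := by
  have hN : ∀ y : S, HasDerivAt (fun γ' : ℝ => Real.exp (-F0 y - γ' * F1 y))
      (-F1 y * Real.exp (-F0 y - γ * F1 y)) γ := by
    intro y
    have h1 : HasDerivAt (fun γ' : ℝ => -F0 y - γ' * F1 y) (-F1 y) γ := by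
      simpa using ((hasDerivAt_mul_const (F1 y)).const_sub (-F0 y))
    simpa [mul_comm] using h1.exp
  have hZ : HasDerivAt (fun γ' : ℝ => ∑ y, Real.exp (-F0 y - γ' * F1 y))
      (∑ y, -F1 y * Real.exp (-F0 y - γ * F1 y)) γ :=
    HasDerivAt.fun_sum fun y _ => hN y
  have hdiv := (hN x).fun_div hZ (ne_of_gt (Zbolt_pos F0 F1 γ))
  convert hdiv using 1
  case e'_4 => rfl
  case e'_5 => rfl
  case e'_8 => rfl
  have hZne : (∑ y, Real.exp (-F0 y - γ * F1 y)) ≠ 0 := ne_of_gt (Zbolt_pos F0 F1 γ)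
  have hW : (∑ y, -F1 y * Real.exp (-F0 y - γ * F1 y))
      = -∑ y, F1 y * Real.exp (-F0 y - γ * F1 y) := by
    rw [← Finset.sum_neg_distrib]
    exact Finset.sum_congr rfl fun y _ => by ring
  have hE : Ebolt F0 F1 γ = (∑ y, F1 y * Real.exp (-F0 y - γ * F1 y)) /
      (∑ y, Real.exp (-F0 y - γ * F1 y)) := by
    unfold Ebolt Qbolt
    rw [Finset.sum_div]
    exact Finset.sum_congr rfl fun y _ => by rw [mul_div_assoc]
  rw [hW, hE]
  unfold Qbolt
  field_simp
  ring

end Boltzmann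
section BoltzmannLimits

variable {S : Type*} [Fintype S] [DecidableEq S] [Nonempty S]

lemma Qbolt_shift (F0 F1 : S → ℝ) (m : ℝ) (γ : ℝ) (x : S) :
    Qbolt F0 F1 γ x =
      Real.exp (-F0 x - γ * (F1 x - m)) / ∑ y, Real.exp (-F0 y - γ * (F1 y - m)) := by
  unfold Qbolt
  have h1 : ∀ y : S, Real.exp (-F0 y - γ * (F1 y - m))
      = Real.exp (-F0 y - γ * F1 y) * Real.exp (γ * m) := by
    intro y
    rw [← Real.exp_add]
    congr 1
    ring
  simp only [h1]
  rw [← Finset.sum_mul, mul_div_mul_right _ _ (ne_of_gt (Real.exp_pos _))]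

lemma tendsto_exp_shift (F0 F1 : S → ℝ) (m : ℝ) (y : S) (h : m < F1 y) :
    Tendsto (fun γ : ℝ => Real.exp (-F0 y - γ * (F1 y - m))) atTop (nhds 0) := by
  apply Real.tendsto_exp_atBot.comp
  have h1 : Tendsto (fun γ : ℝ => -(F1 y - m) * γ) atTop atBot :=
    tendsto_id.const_mul_atTop_of_neg (by linarith : -(F1 y - m) < 0)
  have h2 : Tendsto (fun γ : ℝ => -F0 y + -(F1 y - m) * γ) atTop atBot :=
    tendsto_atBot_add_const_left atTop (-F0 y) h1
  refine h2.congr fun γ => ?_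
  ring

/-- The pointwise limit of the Boltzmann distribution is `rLimit`. -/
lemma Qbolt_tendsto_rLimit (F0 F1 : S → ℝ) (x : S) :
    Tendsto (fun γ : ℝ => Qbolt F0 F1 γ x) atTop (nhds (rLimit F0 F1 1 x)) := by
  classical
  set m : ℝ := Finset.univ.inf' Finset.univ_nonempty F1 with hm
  have hmle : ∀ y, m ≤ F1 y := fun y => Finset.inf'_le _ (Finset.mem_univ y)
  have hmin_iff : ∀ y : S, (∀ z, F1 y ≤ F1 z) ↔ F1 y = m := by
    intro y
    constructor
    · intro h
      exact le_antisymm (Finset.le_inf' _ _ fun z _ => h z) (hmle y)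
    · intro h z
      rw [h]; exact hmle z
  -- numerator limit
  have hnum : ∀ y : S, Tendsto (fun γ : ℝ => Real.exp (-F0 y - γ * (F1 y - m))) atTop
      (nhds (if ∀ z, F1 y ≤ F1 z then Real.exp (-F0 y) else 0)) := by
    intro y
    by_cases hy : ∀ z, F1 y ≤ F1 z
    · rw [if_pos hy]
      have h1 : F1 y = m := (hmin_iff y).mp hy
      have : ∀ γ : ℝ, Real.exp (-F0 y - γ * (F1 y - m)) = Real.exp (-F0 y) := by
        intro γ; rw [h1]; ring_nf
      simp only [this]
      exact tendsto_const_nhds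
    · rw [if_neg hy]
      have h1 : m < F1 y := lt_of_le_of_ne (hmle y) fun h => hy ((hmin_iff y).mpr h.symm)
      exact tendsto_exp_shift F0 F1 m y h1
  have hden : Tendsto (fun γ : ℝ => ∑ y, Real.exp (-F0 y - γ * (F1 y - m))) atTop
      (nhds (∑ y, if ∀ z, F1 y ≤ F1 z then Real.exp (-F0 y) else 0)) :=
    tendsto_finset_sum _ fun y _ => hnum y
  have hDpos : 0 < ∑ y, if ∀ z, F1 y ≤ F1 z then Real.exp (-F0 y) else 0 := by
    obtain ⟨y0, -, hy0⟩ := Finset.exists_mem_eq_inf' (Finset.univ_nonempty (α := S)) F1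
    apply Finset.sum_pos'
    · intro y _
      split
      · exact le_of_lt (Real.exp_pos _)
      · exact le_refl 0
    · refine ⟨y0, Finset.mem_univ y0, ?_⟩
      rw [if_pos ((hmin_iff y0).mpr hy0.symm)]
      exact Real.exp_pos _
  have hmain : Tendsto (fun γ : ℝ => Qbolt F0 F1 γ x) atTop
      (nhds ((if ∀ z, F1 x ≤ F1 z then Real.exp (-F0 x) else 0) /
        ∑ y, if ∀ z, F1 y ≤ F1 z then Real.exp (-F0 y) else 0)) := by
    have := (hnum x).div hden (ne_of_gt hDpos)
    refine this.congr fun γ => ?_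
    simp only [Pi.div_apply]
    rw [Qbolt_shift F0 F1 m]
  convert hmain using 2
  unfold rLimit
  by_cases hx : ∀ z, F1 x ≤ F1 z
  · rw [if_pos hx, if_pos hx]
    rw [Finset.sum_filter]
    congr 1
    · norm_num
    · refine Finset.sum_congr rfl fun y _ => ?_
      split <;> norm_num
  · rw [if_neg hx, if_neg hx, zero_div]

lemma Ebolt_tendsto (F0 F1 : S → ℝ) :
    Tendsto (Ebolt F0 F1) atTop
      (nhds (Finset.univ.inf' Finset.univ_nonempty F1)) := by
  classical
  set m : ℝ := Finset.univ.inf' Finset.univ_nonempty F1 with hm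
  have h1 : Tendsto (Ebolt F0 F1) atTop (nhds (∑ x, F1 x * rLimit F0 F1 1 x)) := by
    unfold Ebolt
    exact tendsto_finset_sum _ fun x _ =>
      (Qbolt_tendsto_rLimit F0 F1 x).const_mul (F1 x)
  have h2 : ∑ x, F1 x * rLimit F0 F1 1 x = m := by
    have hmin_iff : ∀ y : S, (∀ z, F1 y ≤ F1 z) → F1 y = m := by
      intro y h
      exact le_antisymm (Finset.le_inf' _ _ fun z _ => h z)
        (Finset.inf'_le _ (Finset.mem_univ y))
    have h3 : ∀ x : S, F1 x * rLimit F0 F1 1 x = m * rLimit F0 F1 1 x := by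
      intro x
      unfold rLimit
      by_cases hx : ∀ z, F1 x ≤ F1 z
      · rw [if_pos hx, hmin_iff x hx]
      · rw [if_neg hx, mul_zero, mul_zero]
    simp only [h3]
    rw [← Finset.mul_sum]
    have hsum1 : ∑ x, rLimit F0 F1 1 x = 1 := by
      unfold rLimit
      rw [← Finset.sum_filter, ← Finset.sum_div]
      apply div_self
      apply ne_of_gt
      apply Finset.sum_pos'
      · intro y _; exact le_of_lt (Real.exp_pos _)
      · obtain ⟨y0, -, hy0⟩ := Finset.exists_mem_eq_inf' (Finset.univ_nonempty (α := S)) F1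
        refine ⟨y0, ?_, Real.exp_pos _⟩
        rw [Finset.mem_filter]
        exact ⟨Finset.mem_univ y0, fun z => hy0 ▸ Finset.inf'_le _ (Finset.mem_univ z)⟩
    rw [hsum1, mul_one]
  rwa [h2] at h1

end BoltzmannLimits
section BoltzmannVariation

variable {S : Type*} [Fintype S] [DecidableEq S] [Nonempty S]

lemma Qbolt_differentiable (F0 F1 : S → ℝ) (x : S) :
    Differentiable ℝ (fun γ => Qbolt F0 F1 γ x) :=
  fun γ => (hasDerivAt_Qbolt F0 F1 γ x).differentiableAt

lemma Qbolt_deriv (F0 F1 : S → ℝ) (γ : ℝ) (x : S) :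
    deriv (fun γ' => Qbolt F0 F1 γ' x) γ = Qbolt F0 F1 γ x * (Ebolt F0 F1 γ - F1 x) :=
  (hasDerivAt_Qbolt F0 F1 γ x).deriv

lemma Qbolt_monotone_min (F0 F1 : S → ℝ) (x : S) (hx : ∀ y, F1 x ≤ F1 y) :
    Monotone (fun γ => Qbolt F0 F1 γ x) := by
  apply monotone_of_deriv_nonneg (Qbolt_differentiable F0 F1 x)
  intro γ
  rw [Qbolt_deriv]
  have h1 := Ebolt_ge F0 F1 γ x hx
  have h2 := Qbolt_pos F0 F1 γ x
  nlinarith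

lemma Qbolt_antitoneOn_nonmin (F0 F1 : S → ℝ) (x : S) (γstar : ℝ)
    (hγ : ∀ γ, γstar ≤ γ → Ebolt F0 F1 γ ≤ F1 x) :
    AntitoneOn (fun γ => Qbolt F0 F1 γ x) (Set.Ici γstar) := by
  apply antitoneOn_of_deriv_nonpos (convex_Ici γstar)
  · exact (Qbolt_differentiable F0 F1 x).continuous.continuousOn
  · exact (Qbolt_differentiable F0 F1 x).differentiableOn
  · intro γ hγ'
    rw [interior_Ici, Set.mem_Ioi] at hγ'
    rw [Qbolt_deriv]
    have h1 := hγ γ (le_of_lt hγ')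
    have h2 := Qbolt_pos F0 F1 γ x
    nlinarith

lemma exists_gammastar (F0 F1 : S → ℝ) :
    ∃ γstar : ℝ, ∀ γ, γstar ≤ γ → ∀ x : S, ¬(∀ z, F1 x ≤ F1 z) →
      Ebolt F0 F1 γ ≤ F1 x := by
  classical
  set m : ℝ := Finset.univ.inf' Finset.univ_nonempty F1 with hm
  have hmle : ∀ y, m ≤ F1 y := fun y => Finset.inf'_le _ (Finset.mem_univ y)
  have hev : ∀ᶠ γ : ℝ in atTop, ∀ x : S, ¬(∀ z, F1 x ≤ F1 z) → Ebolt F0 F1 γ ≤ F1 x := by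
    refine Filter.eventually_all.mpr fun x => ?_
    by_cases hx : ∀ z, F1 x ≤ F1 z
    · exact Filter.Eventually.of_forall fun γ h => absurd hx h
    · have h1 : m < F1 x := by
        rcases lt_or_eq_of_le (hmle x) with h | h
        · exact h
        · exfalso; apply hx; intro z; rw [← h]; exact hmle z
      have h2 : ∀ᶠ γ : ℝ in atTop, Ebolt F0 F1 γ < F1 x :=
        (Ebolt_tendsto F0 F1).eventually_lt_const h1
      exact h2.mono fun γ h _ => le_of_lt h
  obtain ⟨γstar, hγstar⟩ := eventually_atTop.mp hev
  exact ⟨γstar, hγstar⟩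

lemma telescope_Ico (f : ℕ → ℝ) {a n : ℕ} (h : a ≤ n) :
    ∑ k ∈ Finset.Ico a n, (f (k + 1) - f k) = f n - f a := by
  rw [Finset.sum_Ico_eq_sub _ h, Finset.sum_range_sub, Finset.sum_range_sub]
  ring

/-- Bounded total variation of the Boltzmann marginals along a monotone divergent
coupling schedule. -/
lemma variation_bounded (F0 F1 : S → ℝ) (γseq : ℕ → ℝ) (hmono : Monotone γseq)
    (htop : Tendsto γseq atTop atTop) :
    ∃ C, ∀ n, ∑ k ∈ Finset.range n,
      dist1 (Qbolt F0 F1 (γseq (k+1))) (Qbolt F0 F1 (γseq k)) ≤ C := by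
  classical
  obtain ⟨γstar, hγstar⟩ := exists_gammastar F0 F1
  obtain ⟨T0, hT0⟩ := (htop.eventually_ge_atTop γstar).exists
  set V : ℕ → ℝ := fun k => dist1 (Qbolt F0 F1 (γseq (k+1))) (Qbolt F0 F1 (γseq k)) with hV
  have hV0 : ∀ k, 0 ≤ V k := fun k => Finset.sum_nonneg fun x _ => abs_nonneg _
  have hγT0 : ∀ k, T0 ≤ k → γstar ≤ γseq k := fun k hk => le_trans hT0 (hmono hk)
  refine ⟨(∑ k ∈ Finset.range T0, V k) + (Fintype.card S : ℝ), fun n => ?_⟩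
  rcases le_or_gt n T0 with hn | hn
  · have h1 : ∑ k ∈ Finset.range n, V k ≤ ∑ k ∈ Finset.range T0, V k :=
      Finset.sum_le_sum_of_subset_of_nonneg (Finset.range_subset_range.mpr hn)
        (fun k _ _ => hV0 k)
    have h2 : (0 : ℝ) ≤ (Fintype.card S : ℝ) := Nat.cast_nonneg _
    linarith
  · have hsplit : ∑ k ∈ Finset.range n, V k
        = (∑ k ∈ Finset.range T0, V k) + ∑ k ∈ Finset.Ico T0 n, V k := by
      have h1 := Finset.sum_Ico_consecutive V (Nat.zero_le T0) (le_of_lt hn)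
      rw [← Finset.range_eq_Ico] at h1
      rw [h1, Finset.range_eq_Ico]
    rw [hsplit]
    have htail : ∑ k ∈ Finset.Ico T0 n, V k ≤ (Fintype.card S : ℝ) := by
      have hswap : ∑ k ∈ Finset.Ico T0 n, V k
          = ∑ x : S, ∑ k ∈ Finset.Ico T0 n,
              |Qbolt F0 F1 (γseq (k+1)) x - Qbolt F0 F1 (γseq k) x| := by
        simp only [hV, dist1]
        rw [Finset.sum_comm]
      rw [hswap]
      have hcard : (Fintype.card S : ℝ) = ∑ _x : S, (1 : ℝ) := by
        simp
      rw [hcard]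
      apply Finset.sum_le_sum
      intro x _
      by_cases hx : ∀ z, F1 x ≤ F1 z
      · -- monotone increasing
        have habs : ∀ k ∈ Finset.Ico T0 n,
            |Qbolt F0 F1 (γseq (k+1)) x - Qbolt F0 F1 (γseq k) x|
              = Qbolt F0 F1 (γseq (k+1)) x - Qbolt F0 F1 (γseq k) x := by
          intro k _
          apply abs_of_nonneg
          have := Qbolt_monotone_min F0 F1 x hx (hmono (Nat.le_succ k))
          linarith [this]
        rw [Finset.sum_congr rfl habs,
          telescope_Ico (fun k => Qbolt F0 F1 (γseq k) x) (le_of_lt hn)]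
        have h1 := Qbolt_le_one F0 F1 (γseq n) x
        have h2 := Qbolt_pos F0 F1 (γseq T0) x
        linarith
      · -- antitone beyond γstar
        have hanti := Qbolt_antitoneOn_nonmin F0 F1 x γstar
          (fun γ hγ => hγstar γ hγ x hx)
        have habs : ∀ k ∈ Finset.Ico T0 n,
            |Qbolt F0 F1 (γseq (k+1)) x - Qbolt F0 F1 (γseq k) x|
              = -(Qbolt F0 F1 (γseq (k+1)) x - Qbolt F0 F1 (γseq k) x) := by
          intro k hk
          rw [Finset.mem_Ico] at hk
          apply abs_of_nonpos
          have := hanti (Set.mem_Ici.mpr (hγT0 k hk.1))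
            (Set.mem_Ici.mpr (hγT0 (k+1) (le_trans hk.1 (Nat.le_succ k))))
            (hmono (Nat.le_succ k))
          linarith
        rw [Finset.sum_congr rfl habs]
        rw [show (∑ k ∈ Finset.Ico T0 n,
            -(Qbolt F0 F1 (γseq (k+1)) x - Qbolt F0 F1 (γseq k) x))
          = -∑ k ∈ Finset.Ico T0 n,
            (Qbolt F0 F1 (γseq (k+1)) x - Qbolt F0 F1 (γseq k) x) from
          Finset.sum_neg_distrib _,
          telescope_Ico (fun k => Qbolt F0 F1 (γseq k) x) (le_of_lt hn)]
        have h1 := Qbolt_le_one F0 F1 (γseq T0) x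
        have h2 := Qbolt_pos F0 F1 (γseq n) x
        linarith
    linarith

end BoltzmannVariation
section Chain

variable {S : Type*} [Fintype S] [DecidableEq S]

lemma gmat_stochastic (P : S → S → ℝ) (hP : IsGenProb P) (A : ℕ → S → S → ℝ)
    (hA : ∀ t y x, 0 ≤ A t y x ∧ A t y x ≤ 1) (t : ℕ) : IsStochastic (GmatOf P A t) := by
  have hkey : ∀ x, ∑ z, P z x * A t z x ≤ 1 := by
    intro x
    calc ∑ z, P z x * A t z x ≤ ∑ z, P z x :=
          Finset.sum_le_sum fun z _ =>
            mul_le_of_le_one_right (hP.nonneg x z) (hA t z x).2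
      _ = 1 := hP.sum_one x
  constructor
  · intro y x
    by_cases h : y = x
    · subst h
      simp only [GmatOf, Matrix.of_apply, eq_self_iff_true, if_true]
      linarith [hkey y]
    · simp only [GmatOf, Matrix.of_apply, if_neg h]
      exact mul_nonneg (hP.nonneg x y) (hA t y x).1
  · intro x
    simp only [GmatOf, Matrix.of_apply]
    rw [← Finset.add_sum_erase _ _ (Finset.mem_univ x), if_pos rfl]
    have herase : ∑ y ∈ Finset.univ.erase x,
        (if y = x then 1 - ∑ z, P z x * A t z x else P y x * A t y x)
        = ∑ y ∈ Finset.univ.erase x, P y x * A t y x := by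
      refine Finset.sum_congr rfl fun y hy => ?_
      rw [if_neg (Finset.ne_of_mem_erase hy)]
    rw [herase]
    have hfull : ∑ y ∈ Finset.univ.erase x, P y x * A t y x = ∑ y, P y x * A t y x := by
      rw [← Finset.add_sum_erase _ _ (Finset.mem_univ x), hP.diag_zero x, zero_mul, zero_add]
    rw [hfull]
    ring

lemma gmat_stationary (P : S → S → ℝ) (hP : IsGenProb P) (g : ℝ → ℝ) (hg : IsAcceptFn g)
    (q : S → ℝ) (hq : ∀ x, 0 < q x) (A : ℕ → S → S → ℝ) (t : ℕ)
    (hA : ∀ y x, A t y x = g (q y / q x)) :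
    (GmatOf P A t).mulVec q = q := by
  have hbal : ∀ y x, P y x * A t y x * q x = P x y * A t x y * q y := by
    intro y x
    rw [hA, hA]
    have hu : 0 < q x / q y := div_pos (hq x) (hq y)
    have hr := hg.ratio (q x / q y) hu
    rw [one_div_div] at hr
    have key : g (q y / q x) * q x = g (q x / q y) * q y := by
      rw [hr, div_div_eq_mul_div, div_mul_cancel₀ _ (ne_of_gt (hq x))]
    rw [hP.symm x y, mul_assoc, mul_assoc, key]
  funext y
  show ∑ x, GmatOf P A t y x * q x = q y
  simp only [GmatOf, Matrix.of_apply]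
  rw [← Finset.add_sum_erase _ _ (Finset.mem_univ y), if_pos rfl]
  have herase : ∑ x ∈ Finset.univ.erase y,
      (if y = x then 1 - ∑ z, P z x * A t z x else P y x * A t y x) * q x
      = ∑ x ∈ Finset.univ.erase y, P x y * A t x y * q y := by
    refine Finset.sum_congr rfl fun x hx => ?_
    rw [if_neg (Ne.symm (Finset.ne_of_mem_erase hx))]
    exact hbal y x
  rw [herase]
  have hfull : ∑ x ∈ Finset.univ.erase y, P x y * A t x y * q y
      = (∑ x, P x y * A t x y) * q y := by
    rw [Finset.sum_mul, ← Finset.add_sum_erase _ (fun x => P x y * A t x y * q y)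
      (Finset.mem_univ y), hP.diag_zero y, zero_mul, zero_mul, zero_add]
  rw [hfull]
  ring

lemma accept_lower (g : ℝ → ℝ) (hg : IsAcceptFn g) {u c : ℝ} (hu : 0 < u)
    (hc : 0 ≤ c) (hc1 : c ≤ 1) (hcu : c ≤ u) : g 1 * c ≤ g u := by
  have hg1nn : 0 ≤ g 1 := (hg.maps 1 zero_le_one).1
  rcases le_total 1 u with h | h
  · have h1 : g 1 ≤ g u := hg.mono (Set.mem_Ici.mpr zero_le_one)
      (Set.mem_Ici.mpr (le_of_lt hu)) h
    calc g 1 * c ≤ g 1 * 1 := mul_le_mul_of_nonneg_left hc1 hg1nn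
      _ = g 1 := mul_one _
      _ ≤ g u := h1
  · have h1u : 1 ≤ 1 / u := one_le_one_div hu h
    have hr := hg.ratio u hu
    have hgu : g u = g (1 / u) * u := by
      field_simp at hr ⊢
      linarith [hr]
    have hg1u : g 1 ≤ g (1 / u) := hg.mono (Set.mem_Ici.mpr zero_le_one)
      (Set.mem_Ici.mpr (by positivity)) h1u
    rw [hgu]
    exact mul_le_mul hg1u hcu hc ((hg.maps (1/u) (by positivity)).1)

lemma accept_le_self (g : ℝ → ℝ) (hg : IsAcceptFn g) {u : ℝ} (hu : 0 < u) :
    g u ≤ u := by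
  have hr := hg.ratio u hu
  have hgu : g u = g (1 / u) * u := by
    field_simp at hr ⊢
    linarith [hr]
  rw [hgu]
  calc g (1/u) * u ≤ 1 * u :=
        mul_le_mul_of_nonneg_right ((hg.maps (1/u) (by positivity)).2) (le_of_lt hu)
    _ = u := one_mul u

/-- Entry of a product of stochastic matrices along a path is at least the product of
the one-step lower bounds. -/
lemma prodG_path_lower (G : ℕ → Matrix S S ℝ) (hG : ∀ t, IsStochastic (G t))
    (s : ℕ) (f : ℕ → S) (κ : ℝ) (hκ : 0 ≤ κ) :
    ∀ n : ℕ, (∀ j < n, κ ≤ G (s + j) (f (j + 1)) (f j)) →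
      κ ^ n ≤ prodG G (s + n) s (f n) (f 0) := by
  intro n
  induction n with
  | zero =>
      intro _
      simp [prodG_self, Matrix.one_apply]
  | succ n ih =>
      intro hstep
      have h1 : s ≤ s + n := Nat.le_add_right _ _
      rw [show s + (n + 1) = (s + n) + 1 by ring, prodG_succ G h1, Matrix.mul_apply]
      have hterm : κ * κ ^ n ≤ G (s + n) (f (n + 1)) (f n) * prodG G (s + n) s (f n) (f 0) := by
        apply mul_le_mul (hstep n (Nat.lt_succ_self n)) (ih fun j hj => hstep j (by omega))
          (pow_nonneg hκ n)
        exact (hG (s + n)).1 _ _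
      calc κ ^ (n + 1) = κ * κ ^ n := by ring
        _ ≤ G (s + n) (f (n + 1)) (f n) * prodG G (s + n) s (f n) (f 0) := hterm
        _ ≤ ∑ z, G (s + n) (f (n + 1)) z * prodG G (s + n) s z (f 0) := by
            apply Finset.single_le_sum
              (f := fun z => G (s + n) (f (n + 1)) z * prodG G (s + n) s z (f 0))
              (fun z _ => mul_nonneg ((hG (s+n)).1 _ _)
                ((IsStochastic.prodG hG h1).1 _ _)) (Finset.mem_univ (f n))

lemma reachIn_symm (P : S → S → ℝ) (hP : IsGenProb P) {n : ℕ} {x y : S}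
    (h : ReachIn P n x y) : ReachIn P n y x := by
  obtain ⟨f, hf0, hfn, hstep⟩ := h
  refine ⟨fun k => f (n - k), by simp [hfn], by simp [hf0], fun k hk => ?_⟩
  have h1 : n - (k + 1) + 1 = n - k := by omega
  have h2 := hstep (n - (k + 1)) (by omega)
  rw [h1] at h2
  rw [hP.symm]
  exact h2

end Chain
section Tanh

lemma tanh_formula (u : ℝ) :
    Real.tanh u = (Real.exp (2 * u) - 1) / (Real.exp (2 * u) + 1) := by
  rw [Real.tanh_eq_sinh_div_cosh, Real.sinh_eq, Real.cosh_eq]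
  have h1 : Real.exp (2 * u) = Real.exp u * Real.exp u := by
    rw [← Real.exp_add]; congr 1; ring
  have h2 : Real.exp (-u) = (Real.exp u)⁻¹ := Real.exp_neg u
  have h3 : Real.exp u ≠ 0 := Real.exp_ne_zero u
  have h4 : Real.exp u + Real.exp (-u) ≠ 0 := by positivity
  have h5 : Real.exp (2 * u) + 1 ≠ 0 := by positivity
  rw [div_div_div_comm, div_self (by norm_num : (2:ℝ) ≠ 0), div_one]
  rw [div_eq_div_iff h4 h5, h1, h2]
  field_simp

lemma tanh_pos' {u : ℝ} (hu : 0 < u) : 0 < Real.tanh u := by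
  rw [tanh_formula]
  apply div_pos
  · have : (1:ℝ) < Real.exp (2*u) := by
      rw [← Real.exp_zero]
      exact Real.exp_lt_exp.mpr (by linarith)
    linarith
  · positivity

lemma tanh_lt_one' (u : ℝ) : Real.tanh u < 1 := by
  rw [tanh_formula]
  rw [div_lt_one (by positivity)]
  linarith

lemma tanh_mono' {u v : ℝ} (h : u ≤ v) : Real.tanh u ≤ Real.tanh v := by
  rw [tanh_formula, tanh_formula]
  have hA : (0:ℝ) < Real.exp (2*u) := Real.exp_pos _
  have hB : (0:ℝ) < Real.exp (2*v) := Real.exp_pos _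
  have hAB : Real.exp (2*u) ≤ Real.exp (2*v) := Real.exp_le_exp.mpr (by linarith)
  rw [div_le_div_iff₀ (by positivity) (by positivity)]
  nlinarith

lemma tanh_artanh {a : ℝ} (h0 : 0 < a) (h1 : a < 1) : Real.tanh (artanh a) = a := by
  have hr : (0:ℝ) < (1 + a) / (1 - a) := by
    apply div_pos <;> linarith
  have hexp : Real.exp (2 * artanh a) = (1 + a) / (1 - a) := by
    unfold artanh
    rw [show 2 * (1 / 2 * Real.log ((1 + a) / (1 - a))) = Real.log ((1 + a) / (1 - a)) by ring]
    exact Real.exp_log hr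
  rw [tanh_formula, hexp]
  have h2 : (1:ℝ) - a ≠ 0 := by linarith
  field_simp
  ring

lemma artanh_pos {a : ℝ} (h0 : 0 < a) (h1 : a < 1) : 0 < artanh a := by
  unfold artanh
  have h2 : (1:ℝ) < (1 + a) / (1 - a) := by
    rw [lt_div_iff₀ (by linarith : (0:ℝ) < 1 - a)]
    linarith
  have := Real.log_pos h2
  linarith

end Tanh
section Gamma

variable (M : ℕ) [NeZero M] (β : ℝ) (Γ : ℕ → ℝ)

lemma Mpos : (0:ℝ) < (M:ℝ) :=
  Nat.cast_pos.mpr (Nat.pos_of_ne_zero (NeZero.ne M))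

lemma gamma_eq (t : ℕ) :
    γtfim M β Γ t = 1 / 2 * Real.log (1 / Real.tanh (β * Γ t / M)) := rfl

lemma gamma_pos (hβ : 0 < β) (hΓ : ∀ t, 0 < Γ t) (t : ℕ) : 0 < γtfim M β Γ t := by
  rw [gamma_eq]
  have hg := hΓ t
  have hu : 0 < β * Γ t / M := div_pos (mul_pos hβ hg) (Mpos M)
  have h1 : 0 < Real.tanh (β * Γ t / M) := tanh_pos' hu
  have h2 : Real.tanh (β * Γ t / M) < 1 := tanh_lt_one' _
  have h3 : 1 < 1 / Real.tanh (β * Γ t / M) := by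
    rw [lt_div_iff₀ h1]; linarith
  have := Real.log_pos h3
  linarith

lemma gamma_mono (hβ : 0 < β) (hΓ : ∀ t, 0 < Γ t) (hanti : Antitone Γ) :
    Monotone (γtfim M β Γ) := by
  intro a b hab
  rw [gamma_eq, gamma_eq]
  have hM := Mpos M
  have hua : 0 < β * Γ a / M := div_pos (mul_pos hβ (hΓ a)) hM
  have hub : 0 < β * Γ b / M := div_pos (mul_pos hβ (hΓ b)) hM
  have h1 : β * Γ b / M ≤ β * Γ a / M := by
    have := hanti hab
    gcongr
  have h2 : Real.tanh (β * Γ b / M) ≤ Real.tanh (β * Γ a / M) := tanh_mono' h1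
  have h3 : 0 < Real.tanh (β * Γ b / M) := tanh_pos' hub
  have h4 : 1 / Real.tanh (β * Γ a / M) ≤ 1 / Real.tanh (β * Γ b / M) :=
    one_div_le_one_div_of_le h3 h2
  have h5 : 0 < 1 / Real.tanh (β * Γ a / M) := one_div_pos.mpr (tanh_pos' hua)
  have := Real.log_le_log h5 h4
  linarith

lemma gamma_tendsto_atTop (hβ : 0 < β) (hΓ : ∀ t, 0 < Γ t)
    (hlim : Tendsto Γ atTop (nhds 0)) :
    Tendsto (γtfim M β Γ) atTop atTop := by
  have hM := Mpos M
  have hu : Tendsto (fun t => β * Γ t / M) atTop (nhds 0) := by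
    have h1 := (hlim.const_mul β).div_const (M:ℝ)
    simpa using h1
  have hτ : Tendsto (fun t => Real.tanh (β * Γ t / M)) atTop (nhds 0) := by
    have he : Tendsto (fun t => Real.exp (2 * (β * Γ t / M))) atTop (nhds 1) := by
      have h0 : Tendsto (fun t => 2 * (β * Γ t / M)) atTop (nhds 0) := by
        simpa using hu.const_mul 2
      have h2 := (Real.continuous_exp.tendsto 0).comp h0
      simpa [Function.comp_def] using h2
    have hdiv : Tendsto (fun t => (Real.exp (2 * (β * Γ t / M)) - 1) /
        (Real.exp (2 * (β * Γ t / M)) + 1)) atTop (nhds 0) := by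
      have h3 := (he.sub_const 1).div (he.add_const 1) (by norm_num)
      simpa [Pi.div_def] using h3
    exact hdiv.congr fun t => (tanh_formula _).symm
  have hτ' : Tendsto (fun t => Real.tanh (β * Γ t / M)) atTop (nhdsWithin 0 (Set.Ioi 0)) := by
    rw [tendsto_nhdsWithin_iff]
    refine ⟨hτ, Filter.Eventually.of_forall fun t => ?_⟩
    exact Set.mem_Ioi.mpr (tanh_pos' (div_pos (mul_pos hβ (hΓ t)) hM))
  have hinv : Tendsto (fun t => (Real.tanh (β * Γ t / M))⁻¹) atTop atTop :=
    hτ'.inv_tendsto_nhdsGT_zero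
  have hlog : Tendsto (fun t => Real.log ((Real.tanh (β * Γ t / M))⁻¹)) atTop atTop :=
    Real.tendsto_log_atTop.comp hinv
  have hfin := hlog.const_mul_atTop (by norm_num : (0:ℝ) < 1/2)
  refine hfin.congr fun t => ?_
  rw [gamma_eq]
  norm_num

lemma gamma_exp_bound (hβ : 0 < β) (hΓ : ∀ t, 0 < Γ t) {RL : ℝ} (hRL : 0 < RL)
    (hsched : ∀ t : ℕ, Γ t ≥ ((M : ℝ) / β) * artanh (((t : ℝ) + 2) ^ (-(2 / RL))))
    (t : ℕ) : 1 / ((t:ℝ) + 2) ≤ Real.exp (-(RL * γtfim M β Γ t)) := by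
  have hM := Mpos M
  have ht2 : (1:ℝ) < (t:ℝ) + 2 := by
    have := Nat.cast_nonneg (α := ℝ) t
    linarith
  set a : ℝ := ((t:ℝ) + 2) ^ (-(2 / RL)) with ha
  have ha0 : 0 < a := Real.rpow_pos_of_pos (by linarith) _
  have ha1 : a < 1 := Real.rpow_lt_one_of_one_lt_of_neg ht2
    (neg_lt_zero.mpr (div_pos two_pos hRL))
  have hart : artanh a ≤ β * Γ t / M := by
    have h4 : β * (((M:ℝ)/β) * artanh a) ≤ β * Γ t :=
      mul_le_mul_of_nonneg_left (hsched t) (le_of_lt hβ)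
    have h5 : β * (((M:ℝ)/β) * artanh a) / M ≤ β * Γ t / M :=
      (div_le_div_iff_of_pos_right hM).mpr h4
    have h6 : β * (((M:ℝ)/β) * artanh a) / M = artanh a := by
      field_simp
    rwa [h6] at h5
  have htanh : a ≤ Real.tanh (β * Γ t / M) := by
    calc a = Real.tanh (artanh a) := (tanh_artanh ha0 ha1).symm
      _ ≤ Real.tanh (β * Γ t / M) := tanh_mono' hart
  have hτ0 : 0 < Real.tanh (β * Γ t / M) := lt_of_lt_of_le ha0 htanh
  have hinv : 1 / Real.tanh (β * Γ t / M) ≤ 1 / a := one_div_le_one_div_of_le ha0 htanh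
  have hlog : Real.log (1 / Real.tanh (β * Γ t / M)) ≤ Real.log (1 / a) :=
    Real.log_le_log (by positivity) hinv
  have hloga : Real.log (1 / a) = (2 / RL) * Real.log ((t:ℝ) + 2) := by
    rw [one_div, Real.log_inv, ha, Real.log_rpow (by linarith)]
    ring
  have hγ : γtfim M β Γ t ≤ Real.log ((t:ℝ) + 2) / RL := by
    rw [gamma_eq]
    rw [hloga] at hlog
    have h7 : 1 / 2 * Real.log (1 / Real.tanh (β * Γ t / M))
        ≤ 1 / 2 * ((2 / RL) * Real.log ((t:ℝ) + 2)) := by linarith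
    calc 1 / 2 * Real.log (1 / Real.tanh (β * Γ t / M))
        ≤ 1 / 2 * ((2 / RL) * Real.log ((t:ℝ) + 2)) := h7
      _ = Real.log ((t:ℝ) + 2) / RL := by ring
  have h8 : RL * γtfim M β Γ t ≤ Real.log ((t:ℝ) + 2) := by
    have := mul_le_mul_of_nonneg_left hγ (le_of_lt hRL)
    calc RL * γtfim M β Γ t ≤ RL * (Real.log ((t:ℝ) + 2) / RL) := this
      _ = Real.log ((t:ℝ) + 2) := by field_simp
  calc 1 / ((t:ℝ) + 2) = Real.exp (-(Real.log ((t:ℝ) + 2))) := by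
        rw [Real.exp_neg, Real.exp_log (by linarith), one_div]
    _ ≤ Real.exp (-(RL * γtfim M β Γ t)) := Real.exp_le_exp.mpr (by linarith)

end Gamma
section Assembly

variable {S : Type*} [Fintype S] [DecidableEq S] [Nonempty S]

lemma dSteps_reach (P : S → S → ℝ) (hP : IsGenProb P) (x y : S) :
    ReachIn P (dSteps P x y) x y := by
  have hne : {n | ReachIn P n x y}.Nonempty := by
    obtain ⟨n, _, z, hz0, hzn, hstep⟩ := hP.irreducible x y
    exact ⟨n, z, hz0, hzn, hstep⟩
  exact Nat.sInf_mem hne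

lemma Rnum_spec (P : S → S → ℝ) (F1 : S → ℝ) (hne : ∃ x, x ∉ Sm P F1) :
    ∃ xs, xs ∉ Sm P F1 ∧ Rnum P F1 = Finset.univ.sup fun y => dSteps P xs y := by
  obtain ⟨x, hx⟩ := hne
  have hmem : (Finset.univ.sup fun y => dSteps P x y) ∈
      {r | ∃ x, x ∉ Sm P F1 ∧ r = Finset.univ.sup fun y => dSteps P x y} := ⟨x, hx, rfl⟩
  have := Nat.sInf_mem (Set.nonempty_of_mem hmem)
  obtain ⟨xs, hxs, hxsR⟩ := this
  exact ⟨xs, hxs, hxsR⟩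

/-- Main generic theorem: strong ergodicity of the Metropolis-type annealing chain. -/
theorem pimc_stronglyErgodic_generic (F0 F1 : S → ℝ) (P : S → S → ℝ) (hP : IsGenProb P)
    (g : ℝ → ℝ) (hg : IsAcceptFn g) (hg1 : 0 < g 1)
    (hne : ∃ x, x ∉ Sm P F1) (hL1 : 0 < Lmax P F1)
    (γseq : ℕ → ℝ) (hγpos : ∀ t, 0 < γseq t) (hγmono : Monotone γseq)
    (hγtop : Tendsto γseq atTop atTop)
    (hbound : ∀ t : ℕ, 1/((t:ℝ)+2) ≤
      Real.exp (-((Rnum P F1 : ℝ) * Lmax P F1 * γseq t))) :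
    StronglyErgodicTo (Gpimc P g F0 F1 1 (fun t => 1 / γseq t)) (rLimit F0 F1 1) := by
  classical
  set L1 : ℝ := Lmax P F1 with hL1def
  set R : ℕ := Rnum P F1 with hRdef
  set T1 : ℕ → ℝ := fun t => 1 / γseq t with hT1
  set A : ℕ → S → S → ℝ :=
    fun t y x => g (qB F0 F1 1 T1 t y / qB F0 F1 1 T1 t x) with hA
  have hGdef : Gpimc P g F0 F1 1 T1 = GmatOf P A := rfl
  set qQ : ℕ → S → ℝ := fun t => Qbolt F0 F1 (γseq t) with hqQ
  -- identification of the Boltzmann distribution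
  have hq_eq : ∀ t, qB F0 F1 1 T1 t = qQ t := by
    intro t
    funext x
    have harg : ∀ y : S, -F0 y / 1 - F1 y / T1 t = -F0 y - γseq t * F1 y := by
      intro y
      rw [hT1]
      show -F0 y / 1 - F1 y / (1 / γseq t) = _
      rw [div_one, div_eq_mul_inv, one_div, inv_inv]
      ring
    unfold qB Zfun
    rw [hqQ]
    unfold Qbolt
    simp only [harg]
  have hqpos : ∀ t x, 0 < qQ t x := fun t x => Qbolt_pos F0 F1 (γseq t) x
  -- acceptance probabilities are in [0,1]
  have hA01 : ∀ t y x, 0 ≤ A t y x ∧ A t y x ≤ 1 := by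
    intro t y x
    have hu : 0 ≤ qB F0 F1 1 T1 t y / qB F0 F1 1 T1 t x := by
      rw [hq_eq t]
      exact le_of_lt (div_pos (hqpos t y) (hqpos t x))
    exact ⟨(hg.maps _ hu).1, (hg.maps _ hu).2⟩
  have hGstoch : ∀ t, IsStochastic (GmatOf P A t) :=
    fun t => gmat_stochastic P hP A hA01 t
  have hstat : ∀ t, (GmatOf P A t).mulVec (qQ t) = qQ t := by
    intro t
    apply gmat_stationary P hP g hg (qQ t) (hqpos t) A t
    intro y x
    rw [hA]
    simp only
    rw [hq_eq t]
  -- edge bounds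
  have hLedge : ∀ x y : S, 0 < P y x → |F1 x - F1 y| ≤ L1 := by
    intro x y h
    have hsub : {v | ∃ x y : S, 0 < P y x ∧ v = |F1 x - F1 y|} ⊆
        Set.range (fun p : S × S => |F1 p.1 - F1 p.2|) := by
      rintro v ⟨a, b, _, rfl⟩
      exact ⟨(a, b), rfl⟩
    have hfin : {v | ∃ x y : S, 0 < P y x ∧ v = |F1 x - F1 y|}.Finite :=
      (Set.finite_range _).subset hsub
    exact le_csSup hfin.bddAbove ⟨x, y, h, rfl⟩
  have hL1nn : 0 ≤ L1 := le_of_lt hL1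
  -- minimum generation probability
  have hWfin : {v | ∃ x y : S, 0 < P y x ∧ v = P y x}.Finite := by
    apply (Set.finite_range (fun p : S × S => P p.1 p.2)).subset
    rintro v ⟨a, b, _, rfl⟩
    exact ⟨(b, a), rfl⟩
  have hWne : {v | ∃ x y : S, 0 < P y x ∧ v = P y x}.Nonempty := by
    obtain ⟨x0⟩ := (inferInstance : Nonempty S)
    by_contra hempty
    rw [Set.not_nonempty_iff_eq_empty] at hempty
    have hall : ∀ y, P y x0 ≤ 0 := by
      intro y
      by_contra hy
      push_neg at hy
      have : P y x0 ∈ {v | ∃ x y : S, 0 < P y x ∧ v = P y x} := ⟨x0, y, hy, rfl⟩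
      rw [hempty] at this
      exact this
    have : ∑ y, P y x0 ≤ 0 := Finset.sum_nonpos fun y _ => hall y
    rw [hP.sum_one x0] at this
    linarith
  have hwmem : wmin P ∈ {v | ∃ x y : S, 0 < P y x ∧ v = P y x} :=
    hWne.csInf_mem hWfin
  have hwpos : 0 < wmin P := by
    obtain ⟨a, b, hab, heq⟩ := hwmem
    rw [heq]; exact hab
  have hwle : ∀ x y : S, 0 < P y x → wmin P ≤ P y x := fun x y h =>
    csInf_le hWfin.bddBelow ⟨x, y, h, rfl⟩
  -- F0 oscillation bound
  set B0 : ℝ := Finset.univ.sup' Finset.univ_nonempty (fun p : S × S => F0 p.1 - F0 p.2)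
    with hB0def
  have hB0 : ∀ x y : S, F0 x - F0 y ≤ B0 := fun x y =>
    Finset.le_sup' (f := fun p : S × S => F0 p.1 - F0 p.2) (Finset.mem_univ (x, y))
  have hB0nn : 0 ≤ B0 := by
    obtain ⟨x0⟩ := (inferInstance : Nonempty S)
    have := hB0 x0 x0
    linarith
  -- anchor state
  obtain ⟨xs, hxs_notin, hxsR⟩ := Rnum_spec P F1 hne
  have hys : ∃ ys, 0 < P ys xs ∧ F1 xs < F1 ys := by
    have : ¬(∀ y, 0 < P y xs → F1 y ≤ F1 xs) := hxs_notin
    push_neg at this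
    obtain ⟨y, h1, h2⟩ := this
    exact ⟨y, h1, h2⟩
  obtain ⟨ys, hPys, hF1ys⟩ := hys
  set δ : ℝ := F1 ys - F1 xs with hδ
  have hδpos : 0 < δ := by rw [hδ]; linarith
  have hdle : ∀ y, dSteps P xs y ≤ R := by
    intro y
    rw [hRdef, hxsR]
    exact Finset.le_sup (Finset.mem_univ y)
  have hRpos : 0 < R := by
    have h1 : dSteps P xs ys ≠ 0 := by
      intro h0
      have hr := dSteps_reach P hP xs ys
      rw [h0] at hr
      obtain ⟨f, hf0, hfn, _⟩ := hr
      have hxy : xs = ys := by rw [← hf0, hfn]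
      rw [hxy] at hF1ys
      exact lt_irrefl _ hF1ys
    exact lt_of_lt_of_le (Nat.pos_of_ne_zero h1) (hdle ys)
  -- ratio formula
  have hratio : ∀ t (y x : S), qQ t y / qQ t x =
      Real.exp ((F0 x - F0 y) + γseq t * (F1 x - F1 y)) :=
    fun t y x => Qbolt_ratio F0 F1 (γseq t) y x
  set c0 : ℝ := wmin P * g 1 * Real.exp (-B0) / 2 with hc0def
  have hc0pos : 0 < c0 := by
    rw [hc0def]
    have := Real.exp_pos (-B0)
    positivity
  -- uniform one-step lower bound along allowed transitions
  have hedge : ∀ t (x y : S), 0 < P y x →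
      c0 * Real.exp (-(γseq t * L1)) ≤ GmatOf P A t y x := by
    intro t x y hPyx
    have hne' : y ≠ x := by
      intro h
      rw [h, hP.diag_zero x] at hPyx
      exact lt_irrefl 0 hPyx
    have hGyx : GmatOf P A t y x = P y x * A t y x := by
      simp only [GmatOf, Matrix.of_apply, if_neg hne']
    set c : ℝ := Real.exp (-B0 - γseq t * L1) with hc
    have hγnn : 0 ≤ γseq t := le_of_lt (hγpos t)
    have hF1b : -L1 ≤ F1 x - F1 y := by
      have h1 := abs_le.mp (hLedge x y hPyx)
      linarith [h1.1]
    have hF0b : -B0 ≤ F0 x - F0 y := by have := hB0 y x; linarith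
    have hexp_le : c ≤ qQ t y / qQ t x := by
      rw [hratio t y x, hc]
      apply Real.exp_le_exp.mpr
      have h2 := mul_le_mul_of_nonneg_left hF1b hγnn
      rw [mul_neg] at h2
      linarith
    have hc_pos : 0 < c := Real.exp_pos _
    have hc_le1 : c ≤ 1 := by
      rw [hc, ← Real.exp_zero]
      apply Real.exp_le_exp.mpr
      have := mul_nonneg hγnn hL1nn
      linarith
    have hupos : 0 < qQ t y / qQ t x := div_pos (hqpos t y) (hqpos t x)
    have haccept : g 1 * c ≤ A t y x := by
      have h3 := accept_lower g hg hupos (le_of_lt hc_pos) hc_le1 hexp_le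
      rw [hA]
      simp only
      rw [hq_eq t]
      exact h3
    rw [hGyx]
    have hsplit : Real.exp (-B0) * Real.exp (-(γseq t * L1)) = c := by
      rw [hc, ← Real.exp_add]
      congr 1
    have hg1c : 0 ≤ g 1 * c := mul_nonneg (le_of_lt hg1) (le_of_lt hc_pos)
    calc c0 * Real.exp (-(γseq t * L1))
        = wmin P * (g 1 * c) / 2 := by rw [hc0def, ← hsplit]; ring
      _ ≤ wmin P * (g 1 * c) := by
          have h0 : 0 ≤ wmin P * (g 1 * c) := mul_nonneg (le_of_lt hwpos) hg1c
          linarith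
      _ ≤ P y x * A t y x := mul_le_mul (hwle x y hPyx) haccept hg1c (hP.nonneg x y)
  -- diagonal bound at the anchor state, beyond a threshold
  set γ1 : ℝ := (B0 + Real.log 2) / δ with hγ1def
  have hdiag : ∀ t, γ1 ≤ γseq t →
      c0 * Real.exp (-(γseq t * L1)) ≤ GmatOf P A t xs xs := by
    intro t hγt
    have hus : qQ t ys / qQ t xs ≤ 1/2 := by
      rw [hratio t ys xs]
      have hexp : (F0 xs - F0 ys) + γseq t * (F1 xs - F1 ys) ≤ -Real.log 2 := by
        have h1 : F0 xs - F0 ys ≤ B0 := hB0 xs ys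
        have h2 : F1 xs - F1 ys = -δ := by rw [hδ]; ring
        rw [h2, mul_neg]
        have h3 : γ1 * δ ≤ γseq t * δ := mul_le_mul_of_nonneg_right hγt (le_of_lt hδpos)
        have h4 : γ1 * δ = B0 + Real.log 2 := by
          rw [hγ1def]
          field_simp
        linarith
      calc Real.exp ((F0 xs - F0 ys) + γseq t * (F1 xs - F1 ys))
          ≤ Real.exp (-Real.log 2) := Real.exp_le_exp.mpr hexp
        _ = 1/2 := by rw [Real.exp_neg, Real.exp_log two_pos, one_div]
    have hA_ys : A t ys xs ≤ 1/2 := by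
      have hupos : 0 < qQ t ys / qQ t xs := div_pos (hqpos t ys) (hqpos t xs)
      have h5 := accept_le_self g hg hupos
      rw [hA]
      simp only
      rw [hq_eq t]
      exact le_trans h5 hus
    have hGxx : GmatOf P A t xs xs = 1 - ∑ z, P z xs * A t z xs := by
      simp only [GmatOf, Matrix.of_apply, eq_self_iff_true, if_true]
    have hsplit := Finset.add_sum_erase Finset.univ (fun z => P z xs * A t z xs)
      (Finset.mem_univ ys)
    have htail : ∑ z ∈ Finset.univ.erase ys, P z xs * A t z xs
        ≤ ∑ z ∈ Finset.univ.erase ys, P z xs :=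
      Finset.sum_le_sum fun z _ => mul_le_of_le_one_right (hP.nonneg xs z) (hA01 t z xs).2
    have hPtail : ∑ z ∈ Finset.univ.erase ys, P z xs = 1 - P ys xs := by
      have h7 := Finset.add_sum_erase Finset.univ (fun z => P z xs) (Finset.mem_univ ys)
      rw [hP.sum_one xs] at h7
      linarith
    have h5 : P ys xs * A t ys xs ≤ P ys xs * (1/2) :=
      mul_le_mul_of_nonneg_left hA_ys (hP.nonneg xs ys)
    have h6 : wmin P ≤ P ys xs := hwle xs ys hPys
    have hsum_le : ∑ z, P z xs * A t z xs ≤ 1 - wmin P * (1/2) := by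
      have h8 : ∑ z, P z xs * A t z xs
          = P ys xs * A t ys xs + ∑ z ∈ Finset.univ.erase ys, P z xs * A t z xs :=
        hsplit.symm
      rw [h8]
      have h9 : wmin P * (1/2) ≤ P ys xs * (1/2) := by linarith
      linarith [htail, hPtail]
    rw [hGxx]
    have hκle : c0 * Real.exp (-(γseq t * L1)) ≤ wmin P * (1/2) := by
      have e1 : Real.exp (-B0) ≤ 1 := by
        rw [← Real.exp_zero]
        exact Real.exp_le_exp.mpr (by linarith)
      have e2 : Real.exp (-(γseq t * L1)) ≤ 1 := by
        rw [← Real.exp_zero]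
        apply Real.exp_le_exp.mpr
        have := mul_nonneg (le_of_lt (hγpos t)) hL1nn
        linarith
      have hg1le : g 1 ≤ 1 := (hg.maps 1 zero_le_one).2
      have step : wmin P * g 1 * Real.exp (-B0) / 2 * Real.exp (-(γseq t * L1))
          ≤ wmin P * 1 * 1 / 2 * 1 := by
        gcongr <;> first
          | exact le_of_lt hwpos
          | exact le_of_lt hg1
          | exact mul_nonneg (mul_nonneg (le_of_lt hwpos) (le_of_lt hg1))
              (le_of_lt (Real.exp_pos _))
          | exact e1
          | exact e2
          | exact hg1le
      rw [hc0def]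
      calc wmin P * g 1 * Real.exp (-B0) / 2 * Real.exp (-(γseq t * L1))
          ≤ wmin P * 1 * 1 / 2 * 1 := step
        _ = wmin P * (1/2) := by ring
    linarith
  -- threshold
  obtain ⟨Tst, hTst⟩ := (hγtop.eventually_ge_atTop γ1).exists
  set cfun : ℕ → ℝ := fun s => c0 ^ R * (1/((s:ℝ) + R + 2)) with hcfun
  have hWE : WeaklyErgodic (GmatOf P A) := by
    apply weaklyErgodic_of_anchor (GmatOf P A) hGstoch R hRpos xs Tst cfun
    · intro s
      have h1 : (0:ℝ) < (s:ℝ) + R + 2 := by positivity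
      exact le_of_lt (mul_pos (pow_pos hc0pos R) (by positivity))
    · intro s hs x
      have hrev := reachIn_symm P hP (dSteps_reach P hP xs x)
      obtain ⟨p, hp0, hpd, hpstep⟩ := hrev
      have hdR : dSteps P xs x ≤ R := hdle x
      set d := dSteps P xs x with hd
      set f : ℕ → S := fun j => if j < d then p j else xs with hf
      have hf0 : f 0 = x := by
        rw [hf]
        simp only
        by_cases h0 : 0 < d
        · rw [if_pos h0]; exact hp0
        · have hd0 : d = 0 := by omega
          rw [if_neg (by omega), ← hpd, hd0]
          exact hp0
      have hfR : f R = xs := by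
        rw [hf]
        simp only
        rw [if_neg (by omega)]
      set κ : ℝ := c0 * Real.exp (-(γseq (s + R) * L1)) with hκdef
      have hκnn : 0 ≤ κ := le_of_lt (mul_pos hc0pos (Real.exp_pos _))
      have hsteps : ∀ j < R, κ ≤ GmatOf P A (s+j) (f (j+1)) (f j) := by
        intro j hj
        have hγj : γseq (s+j) ≤ γseq (s+R) := hγmono (by omega)
        have hκj : κ ≤ c0 * Real.exp (-(γseq (s+j) * L1)) := by
          rw [hκdef]
          apply mul_le_mul_of_nonneg_left _ (le_of_lt hc0pos)
          apply Real.exp_le_exp.mpr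
          have := mul_le_mul_of_nonneg_right hγj hL1nn
          linarith
        rcases lt_or_ge (j+1) d with hcase | hcase
        · have hjd : j < d := by omega
          have hstep := hpstep j hjd
          have hfj : f j = p j := by rw [hf]; simp only; rw [if_pos hjd]
          have hfj1 : f (j+1) = p (j+1) := by rw [hf]; simp only; rw [if_pos hcase]
          rw [hfj, hfj1]
          exact le_trans hκj (hedge (s+j) (p j) (p (j+1)) hstep)
        · rcases eq_or_lt_of_le hcase with heq | hlt
          · -- j + 1 = d
            have hjd : j < d := by omega
            have hstep := hpstep j hjd
            have hfj : f j = p j := by rw [hf]; simp only; rw [if_pos hjd]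
            have hfj1 : f (j+1) = p (j+1) := by
              rw [hf]
              simp only
              rw [if_neg (by omega), ← hpd, heq]
            rw [hfj, hfj1]
            exact le_trans hκj (hedge (s+j) (p j) (p (j+1)) hstep)
          · -- d ≤ j
            have hfj : f j = xs := by rw [hf]; simp only; rw [if_neg (by omega)]
            have hfj1 : f (j+1) = xs := by rw [hf]; simp only; rw [if_neg (by omega)]
            rw [hfj, hfj1]
            have hγ1j : γ1 ≤ γseq (s+j) :=
              le_trans hTst (hγmono (le_trans hs (by omega)))
            exact le_trans hκj (hdiag (s+j) hγ1j)
      have hprod := prodG_path_lower (GmatOf P A) hGstoch s f κ hκnn R hsteps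
      rw [hf0, hfR] at hprod
      have hfinal : cfun s ≤ κ^R := by
        rw [hκdef, mul_pow, ← Real.exp_nat_mul]
        have hb := hbound (s+R)
        have hcast : ((s + R : ℕ):ℝ) = (s:ℝ) + R := by push_cast; ring
        rw [hcast] at hb
        have hexp_eq : (R:ℝ) * (-(γseq (s+R) * L1)) = -((R:ℝ) * L1 * γseq (s+R)) := by
          ring
        rw [hexp_eq]
        rw [hcfun]
        simp only
        rw [show c0 ^ R * (1/((s:ℝ) + R + 2)) = c0 ^ R * (1/((s:ℝ) + R + 2)) from rfl]
        exact mul_le_mul_of_nonneg_left hb (pow_nonneg (le_of_lt hc0pos) R)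
      exact le_trans hfinal hprod
    · intro s0
      have hcomp : ∀ k : ℕ,
          (c0^R / ((s0:ℝ) + R + 2)) * (1/((k:ℝ)+1)) ≤ cfun (s0 + k * R) := by
        intro k
        rw [hcfun]
        simp only
        have hks : (0:ℝ) ≤ (k:ℝ) := Nat.cast_nonneg k
        have hss : (0:ℝ) ≤ (s0:ℝ) := Nat.cast_nonneg s0
        have hRr : (0:ℝ) ≤ (R:ℝ) := Nat.cast_nonneg R
        have hY : (0:ℝ) < ((s0 + k * R : ℕ):ℝ) + R + 2 := by positivity
        have hYX : ((s0 + k * R : ℕ):ℝ) + R + 2 ≤ ((s0:ℝ) + R + 2) * ((k:ℝ) + 1) := by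
          push_cast
          nlinarith
        have h1 : c0^R * (1/(((s0 + k * R : ℕ):ℝ) + R + 2))
            = c0^R / (((s0 + k * R : ℕ):ℝ) + R + 2) := mul_one_div _ _
        have h2 : (c0^R / ((s0:ℝ) + R + 2)) * (1/((k:ℝ)+1))
            = c0^R / (((s0:ℝ) + R + 2) * ((k:ℝ)+1)) := by
          rw [div_mul_div_comm, mul_one]
        rw [h1, h2]
        exact div_le_div_of_nonneg_left (pow_nonneg (le_of_lt hc0pos) R) hY hYX
      have hCpos : 0 < c0^R / ((s0:ℝ) + R + 2) :=
        div_pos (pow_pos hc0pos R) (by positivity)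
      have hmul := Real.tendsto_sum_range_one_div_nat_succ_atTop.const_mul_atTop hCpos
      apply tendsto_atTop_mono _ hmul
      intro n
      rw [Finset.mul_sum]
      exact Finset.sum_le_sum fun k _ => hcomp k
  -- conclude strong ergodicity
  obtain ⟨C, hC⟩ := variation_bounded F0 F1 γseq hγmono hγtop
  have hqr : Tendsto (fun t => dist1 (qQ t) (rLimit F0 F1 1)) atTop (nhds 0) := by
    have h0 : ∀ x : S, Tendsto (fun t => |qQ t x - rLimit F0 F1 1 x|) atTop (nhds 0) := by
      intro x
      have h1 := (Qbolt_tendsto_rLimit F0 F1 x).comp hγtop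
      have h2 := (h1.sub_const (rLimit F0 F1 1 x)).abs
      simpa using h2
    have h3 := tendsto_finset_sum Finset.univ (fun x (_ : x ∈ Finset.univ) => h0 x)
    simpa [dist1] using h3
  rw [hGdef]
  exact stronglyErgodicTo_of (GmatOf P A) hGstoch hWE qQ
    (fun t => Qbolt_probVec F0 F1 (γseq t)) hstat C hC (rLimit F0 F1 1) hqr

end Assembly
lemma Rnum_pos {S : Type*} [Fintype S] [DecidableEq S] [Nonempty S] (P : S → S → ℝ) (F1 : S → ℝ)
    (hP : IsGenProb P) (hne : ∃ x, x ∉ Sm P F1) : 0 < Rnum P F1 := by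
  obtain ⟨xs, hxs_notin, hxsR⟩ := Rnum_spec P F1 hne
  have hys : ∃ ys, 0 < P ys xs ∧ F1 xs < F1 ys := by
    have h1 : ¬(∀ y, 0 < P y xs → F1 y ≤ F1 xs) := hxs_notin
    push_neg at h1
    obtain ⟨y, h2, h3⟩ := h1
    exact ⟨y, h2, h3⟩
  obtain ⟨ys, hPys, hF1ys⟩ := hys
  have h1 : dSteps P xs ys ≠ 0 := by
    intro h0
    have hr := dSteps_reach P hP xs ys
    rw [h0] at hr
    obtain ⟨f, hf0, hfn, _⟩ := hr
    have hxy : xs = ys := by rw [← hf0, hfn]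
    rw [hxy] at hF1ys
    exact lt_irrefl _ hF1ys
  have h2 : dSteps P xs ys ≤ Rnum P F1 := by
    rw [hxsR]
    exact Finset.le_sup (Finset.mem_univ ys)
  omega

/-- Corollary: strong ergodicity of QA-PIMC for the TFIM.  The
inhomogeneous Markov chain generated by the Suzuki–Trotter Boltzmann factor of the
transverse-field Ising model is strongly ergodic, converging to the equilibrium state
of the classical interaction term alone, provided
`Γ(t) ≥ (M/β) artanh ((t+2)^(-2/(R L1)))`. -/
theorem tfim_pimc_stronglyErgodic
    (N M : ℕ) [NeZero M] (β : ℝ) (hβ : 0 < β)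
    (J : Fin (N + 1) → Fin (N + 1) → ℝ)
    (Γ : ℕ → ℝ) (hΓpos : ∀ t, 0 < Γ t) (hΓanti : Antitone Γ)
    (hΓlim : Tendsto Γ atTop (nhds 0))
    (P : (Fin (N + 1) × Fin M → Bool) → (Fin (N + 1) × Fin M → Bool) → ℝ)
    (hP : IsGenProb P)
    (g : ℝ → ℝ) (hg : IsAcceptFn g) (hg1 : 0 < g 1)
    (hne : ∃ x, x ∉ Sm P (F1tfim N M)) (hL1 : 0 < Lmax P (F1tfim N M))
    (hsched : ∀ t : ℕ, Γ t ≥ ((M : ℝ) / β) *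
      artanh (((t : ℝ) + 2) ^
        (-(2 / ((Rnum P (F1tfim N M) : ℝ) * Lmax P (F1tfim N M)))))) :
    StronglyErgodicTo
      (Gpimc P g (F0tfim N M β J) (F1tfim N M) 1 (fun t => 1 / γtfim M β Γ t))
      (rLimit (F0tfim N M β J) (F1tfim N M) 1) := by
  have hRpos := Rnum_pos P (F1tfim N M) hP hne
  have hRL : 0 < ((Rnum P (F1tfim N M) : ℝ)) * Lmax P (F1tfim N M) :=
    mul_pos (Nat.cast_pos.mpr hRpos) hL1
  exact pimc_stronglyErgodic_generic (F0tfim N M β J) (F1tfim N M) P hP g hg hg1 hne hL1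
    (γtfim M β Γ)
    (gamma_pos M β Γ hβ hΓpos)
    (gamma_mono M β Γ hβ hΓpos hΓanti)
    (gamma_tendsto_atTop M β Γ hβ hΓpos hΓlim)
    (fun t => gamma_exp_bound M β Γ hβ hΓpos hRL hsched t)

end QAPaper
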